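/- arXiv:2111.06277 — 3 statements merged into one kernel-verified Lean document; each statement's English description precedes it below -/
import Mathlib

section
/- Fix m ≥ 1, 0 ≤ α < n, and 0 < ε < 1. Suppose J ⊂ I ⊂ K are cubes in ℝⁿ with dist(J, ∂I) > 2√n · ℓ(J)^ε · ℓ(I)^{1-ε}. Then for any locally finite positive Borel measure σ, P^α_m(J, σ·1_{K∖I}) ≤ C (ℓ(J)/ℓ(I))^{m - ε(n+m-α)} · P^α_m(I, σ·1_{K∖I}), with constant C depending only on n, m, α, ε. -/
open MeasureTheory ENNReal

noncomputable section

/-- The axis-parallel cube in `ℝⁿ` with center `c` and side length `l`. -/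
def Cube (n : ℕ) (c : Fin n → ℝ) (l : ℝ) : Set (Fin n → ℝ) :=
  {x | ∀ i, |x i - c i| ≤ l / 2}

/-- The `m`-th order fractional Poisson integral
`P^α_m(Q,μ) = ∫ ℓ(Q)^m / (ℓ(Q) + |y - c_Q|)^(n+m-α) dμ(y)` of the cube with
center `c` and side length `l`. -/
def PoissonInt (n : ℕ) (α : ℝ) (m : ℕ) (c : Fin n → ℝ) (l : ℝ)
    (μ : Measure (Fin n → ℝ)) : ℝ≥0∞ :=
  ∫⁻ y, ENNReal.ofReal (l ^ m / (l + ‖y - c‖) ^ ((n : ℝ) + m - α)) ∂μ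

lemma cube_eq_closedBall (n : ℕ) (c : Fin n → ℝ) (l : ℝ) (hl : 0 ≤ l) :
    Cube n c l = Metric.closedBall c (l / 2) := by
  ext x
  simp only [Cube, Set.mem_setOf_eq, Metric.mem_closedBall]
  rw [dist_pi_le_iff (by linarith)]
  simp [Real.dist_eq]

/-- A segment from a point of a closed set to a point outside it crosses the frontier. -/
lemma segment_crosses_frontier {E : Type*} [NormedAddCommGroup E] [NormedSpace ℝ E]
    {t : Set E} (ht : IsClosed t) (x y : E) (hx : x ∈ t) (hy : y ∉ t) :
    ∃ z ∈ segment ℝ x y, z ∈ frontier t := by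
  by_contra h
  push_neg at h
  have hpre : IsPreconnected (segment ℝ x y) := (convex_segment x y).isPreconnected
  have hcover : segment ℝ x y ⊆ interior t ∪ (closure t)ᶜ := by
    intro z hz
    rcases Classical.em (z ∈ closure t) with hzc | hzc
    · left
      by_contra hzi
      exact h z hz ⟨hzc, hzi⟩
    · right; exact hzc
  have h1 : (segment ℝ x y ∩ interior t).Nonempty := by
    refine ⟨x, left_mem_segment ℝ x y, ?_⟩
    by_contra hxi
    exact h x (left_mem_segment ℝ x y) ⟨subset_closure hx, hxi⟩
  have h2 : (segment ℝ x y ∩ (closure t)ᶜ).Nonempty :=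
    ⟨y, right_mem_segment ℝ x y, by rwa [ht.closure_eq]⟩
  obtain ⟨z, _, hzi, hzc⟩ := hpre _ _ isOpen_interior isClosed_closure.isOpen_compl
    hcover h1 h2
  exact hzc (subset_closure (interior_subset hzi))

/-- If `J ⊂ I ⊂ K` with `dist(J, ∂I) > 2√n ℓ(J)^ε ℓ(I)^(1-ε)`, then
`P^α_m(J, σ 1_{K∖I}) ≲ (ℓ(J)/ℓ(I))^(m - ε(n+m-α)) P^α_m(I, σ 1_{K∖I})`. -/
theorem poisson_decay_good_cubes (n m : ℕ) (α ε : ℝ) (hn : 0 < n) (hm : 1 ≤ m)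
    (hα0 : 0 ≤ α) (hαn : α < n) (hε0 : 0 < ε) (hε1 : ε < 1) :
    ∃ C : ℝ, 0 < C ∧
      ∀ (σ : Measure (Fin n → ℝ)), IsLocallyFiniteMeasure σ →
      ∀ (cJ cI cK : Fin n → ℝ) (lJ lI lK : ℝ),
        0 < lJ → 0 < lI → 0 < lK →
        Cube n cJ lJ ⊆ Cube n cI lI → Cube n cI lI ⊆ Cube n cK lK →
        (∀ x ∈ Cube n cJ lJ, ∀ y ∈ frontier (Cube n cI lI),
          2 * Real.sqrt n * lJ ^ ε * lI ^ (1 - ε) < dist x y) →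
        PoissonInt n α m cJ lJ (σ.restrict (Cube n cK lK \ Cube n cI lI)) ≤
          ENNReal.ofReal (C * (lJ / lI) ^ ((m : ℝ) - ε * ((n : ℝ) + m - α))) *
            PoissonInt n α m cI lI (σ.restrict (Cube n cK lK \ Cube n cI lI)) := by
  have hm1 : (1:ℝ) ≤ m := by exact_mod_cast hm
  have hn1 : (1:ℝ) ≤ n := by exact_mod_cast hn
  set p : ℝ := (n : ℝ) + m - α with hp_def
  have hp : 0 < p := by simp only [hp_def]; linarith
  refine ⟨(3:ℝ) ^ p, Real.rpow_pos_of_pos (by norm_num) p, ?_⟩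
  intro σ _ cJ cI cK lJ lI lK hlJ hlI hlK hJI hIK hdist
  -- basic geometric facts
  have hcJJ : cJ ∈ Cube n cJ lJ := by
    intro i; simp only [sub_self, abs_zero]; positivity
  have hcJI : cJ ∈ Cube n cI lI := hJI hcJJ
  have hlJI : lJ ≤ lI := by
    have i : Fin n := ⟨0, hn⟩
    have h1 : Function.update cJ i (cJ i + lJ / 2) ∈ Cube n cJ lJ := by
      intro j
      rcases eq_or_ne j i with rfl | hji
      · simp only [Function.update_self]
        rw [show cJ j + lJ / 2 - cJ j = lJ / 2 by ring, abs_of_nonneg (by linarith)]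
      · simp only [Function.update_of_ne hji, sub_self, abs_zero]; positivity
    have h2 : Function.update cJ i (cJ i - lJ / 2) ∈ Cube n cJ lJ := by
      intro j
      rcases eq_or_ne j i with rfl | hji
      · simp only [Function.update_self]
        rw [show cJ j - lJ / 2 - cJ j = -(lJ / 2) by ring, abs_neg,
          abs_of_nonneg (by linarith)]
      · simp only [Function.update_of_ne hji, sub_self, abs_zero]; positivity
    have h1' := hJI h1 i
    have h2' := hJI h2 i
    simp only [Function.update_self] at h1' h2'
    rw [abs_le] at h1' h2'
    linarith [h1'.2, h2'.1]
  have hIclosed : IsClosed (Cube n cI lI) := by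
    rw [cube_eq_closedBall n cI lI hlI.le]; exact Metric.isClosed_closedBall
  have hKclosed : IsClosed (Cube n cK lK) := by
    rw [cube_eq_closedBall n cK lK hlK.le]; exact Metric.isClosed_closedBall
  -- distance lower bound for points outside I
  have hDt : ∀ y ∉ Cube n cI lI,
      2 * Real.sqrt n * lJ ^ ε * lI ^ (1 - ε) < ‖y - cJ‖ := by
    intro y hy
    obtain ⟨z, hzseg, hzfr⟩ := segment_crosses_frontier hIclosed cJ y hcJI hy
    have hd1 := hdist cJ hcJJ z hzfr
    have hd2 : dist cJ z ≤ dist cJ y := by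
      have h3 : dist cJ z + dist z y = dist cJ y := dist_add_dist_of_mem_segment hzseg
      linarith [dist_nonneg (x := z) (y := y)]
    calc 2 * Real.sqrt n * lJ ^ ε * lI ^ (1 - ε) < dist cJ z := hd1
      _ ≤ dist cJ y := hd2
      _ = ‖y - cJ‖ := by rw [dist_eq_norm, norm_sub_rev]
  have hsqn : (1:ℝ) ≤ Real.sqrt n := by
    rw [show (1:ℝ) = Real.sqrt 1 by simp]
    exact Real.sqrt_le_sqrt hn1
  -- key pointwise estimate
  have key : ∀ y ∉ Cube n cI lI,
      lJ ^ m / (lJ + ‖y - cJ‖) ^ p ≤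
        ((3:ℝ) ^ p * (lJ / lI) ^ ((m : ℝ) - ε * p)) *
          (lI ^ m / (lI + ‖y - cI‖) ^ p) := by
    intro y hy
    set t : ℝ := ‖y - cJ‖ with ht_def
    set s : ℝ := ‖y - cI‖ with hs_def
    have hX0 : (0:ℝ) < lJ ^ ε * lI ^ (1 - ε) :=
      mul_pos (Real.rpow_pos_of_pos hlJ ε) (Real.rpow_pos_of_pos hlI (1 - ε))
    have ht : 2 * (lJ ^ ε * lI ^ (1 - ε)) ≤ t := by
      have h1 := hDt y hy
      nlinarith [hX0]
    have ht0 : 0 < t := by nlinarith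
    have hs0 : 0 ≤ s := norm_nonneg _
    have hcc : ‖cJ - cI‖ ≤ lI / 2 := by
      rw [pi_norm_le_iff_of_nonneg (by linarith)]
      intro i
      simpa [Real.norm_eq_abs] using hcJI i
    have hst : s ≤ t + lI / 2 := by
      calc s = ‖(y - cJ) + (cJ - cI)‖ := by rw [hs_def]; ring_nf
        _ ≤ ‖y - cJ‖ + ‖cJ - cI‖ := norm_add_le _ _
        _ ≤ t + lI / 2 := by rw [← ht_def]; linarith
    set Q : ℝ := (lI / lJ) ^ ε with hQ_def
    have hQ0 : 0 < Q := Real.rpow_pos_of_pos (div_pos hlI hlJ) ε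
    have hQ1 : 1 ≤ Q := Real.one_le_rpow (by rw [le_div_iff₀ hlJ]; linarith) hε0.le
    have hlJε : lJ ^ ε ≠ 0 := ne_of_gt (Real.rpow_pos_of_pos hlJ ε)
    have hQX : Q * (lJ ^ ε * lI ^ (1 - ε)) = lI := by
      calc Q * (lJ ^ ε * lI ^ (1 - ε))
          = lI ^ ε / lJ ^ ε * lJ ^ ε * lI ^ (1 - ε) := by
            rw [hQ_def, Real.div_rpow hlI.le hlJ.le]; ring
        _ = lI ^ ε * lI ^ (1 - ε) := by rw [div_mul_cancel₀ _ hlJε]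
        _ = lI ^ (ε + (1 - ε)) := (Real.rpow_add hlI _ _).symm
        _ = lI := by rw [show ε + (1 - ε) = (1:ℝ) by ring, Real.rpow_one]
    have hQlI : lI ≤ Q * t := by
      calc lI = Q * (lJ ^ ε * lI ^ (1 - ε)) := hQX.symm
        _ ≤ Q * t := by nlinarith
    have hB : lI + s ≤ 3 * (Q * (lJ + t)) := by
      have h1 : t ≤ Q * (lJ + t) := by nlinarith
      have h2 : lI ≤ Q * (lJ + t) := by nlinarith
      linarith
    have hA0 : 0 < lJ + t := by linarith
    have hB0 : 0 < lI + s := by linarith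
    have hQp : Q ^ p = (lI / lJ) ^ (ε * p) :=
      (Real.rpow_mul (by positivity) ε p).symm
    have hBp : (lI + s) ^ p ≤ 3 ^ p * ((lI / lJ) ^ (ε * p) * (lJ + t) ^ p) := by
      calc (lI + s) ^ p ≤ (3 * (Q * (lJ + t))) ^ p :=
            Real.rpow_le_rpow hB0.le hB hp.le
        _ = 3 ^ p * ((lI / lJ) ^ (ε * p) * (lJ + t) ^ p) := by
            rw [Real.mul_rpow (by norm_num) (by positivity),
              Real.mul_rpow hQ0.le hA0.le, hQp]
    have hr0 : (0:ℝ) < lJ / lI := div_pos hlJ hlI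
    have hsplit : (lJ / lI) ^ ((m : ℝ) - ε * p)
        = (lJ / lI) ^ m * (lI / lJ) ^ (ε * p) := by
      rw [Real.rpow_sub hr0, Real.rpow_natCast, div_eq_mul_inv ((lJ / lI) ^ m),
        ← Real.inv_rpow hr0.le, inv_div]
    have hrm : (lJ / lI) ^ m * lI ^ m = lJ ^ m := by
      rw [div_pow, div_mul_cancel₀]
      positivity
    have hRHSeq : ((3:ℝ) ^ p * (lJ / lI) ^ ((m : ℝ) - ε * p)) * (lI ^ m / (lI + s) ^ p)
        = (3 ^ p * ((lI / lJ) ^ (ε * p) * lJ ^ m)) / (lI + s) ^ p := by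
      rw [hsplit, ← hrm]; ring
    rw [hRHSeq, div_le_div_iff₀ (by positivity) (by positivity)]
    have hmul := mul_le_mul_of_nonneg_left hBp (pow_nonneg hlJ.le m)
    calc lJ ^ m * (lI + s) ^ p
        ≤ lJ ^ m * (3 ^ p * ((lI / lJ) ^ (ε * p) * (lJ + t) ^ p)) := hmul
      _ = 3 ^ p * ((lI / lJ) ^ (ε * p) * lJ ^ m) * (lJ + t) ^ p := by ring
  -- integrate the pointwise estimate
  set S := Cube n cK lK \ Cube n cI lI with hS_def
  have hS : MeasurableSet S := hKclosed.measurableSet.diff hIclosed.measurableSet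
  set r : ℝ := (3:ℝ) ^ p * (lJ / lI) ^ ((m : ℝ) - ε * p) with hr_def
  have hr0 : 0 ≤ r := by positivity
  have hae : ∀ᵐ y ∂(σ.restrict S),
      ENNReal.ofReal (lJ ^ m / (lJ + ‖y - cJ‖) ^ p) ≤
        ENNReal.ofReal r * ENNReal.ofReal (lI ^ m / (lI + ‖y - cI‖) ^ p) := by
    rw [ae_restrict_iff' hS]
    refine Filter.Eventually.of_forall fun y hy => ?_
    have hk := key y hy.2
    calc ENNReal.ofReal (lJ ^ m / (lJ + ‖y - cJ‖) ^ p)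
        ≤ ENNReal.ofReal (r * (lI ^ m / (lI + ‖y - cI‖) ^ p)) :=
          ENNReal.ofReal_le_ofReal hk
      _ = ENNReal.ofReal r * ENNReal.ofReal (lI ^ m / (lI + ‖y - cI‖) ^ p) :=
          ENNReal.ofReal_mul hr0
  calc PoissonInt n α m cJ lJ (σ.restrict S)
      ≤ ∫⁻ y, ENNReal.ofReal r *
          ENNReal.ofReal (lI ^ m / (lI + ‖y - cI‖) ^ p) ∂(σ.restrict S) :=
        lintegral_mono_ae hae
    _ = ENNReal.ofReal r * PoissonInt n α m cI lI (σ.restrict S) :=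
        lintegral_const_mul' _ _ ENNReal.ofReal_ne_top
end
end

section
/- Let ω be a doubling measure on ℝⁿ and κ ∈ ℕ. For every cube I and locally f ∈ L²_loc(ω), the projection 𝔼^ω_{I;κ} f of f onto the space of polynomials of degree less than κ restricted to I (orthogonal projection in L²(ω)) satisfies ‖𝔼^ω_{I;κ} f‖_{L^∞(I,ω)} ≤ C (1/|I|_ω ∫_I |f|² dω)^{1/2}, with C depending only on n, κ and the doubling constant of ω. -/
open MeasureTheory ENNReal

noncomputable section

/-- A measure is doubling with constant `C` if `μ(2Q) ≤ C μ(Q)` for all cubes `Q`. -/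
def IsDoubling {n : ℕ} (μ : Measure (Fin n → ℝ)) (C : ℝ) : Prop :=
  ∀ (c : Fin n → ℝ) (l : ℝ), 0 < l →
    μ (Cube n c (2 * l)) ≤ ENNReal.ofReal C * μ (Cube n c l)

namespace PolyProjAux

open MvPolynomial

variable {n κ : ℕ}

/-! ### Basic cube lemmas -/

lemma cube_eq_pi (c : Fin n → ℝ) (l : ℝ) :
    Cube n c l = Set.pi Set.univ (fun i => Set.Icc (c i - l/2) (c i + l/2)) := by
  ext x
  simp only [Cube, Set.mem_setOf_eq, Set.mem_pi, Set.mem_univ, Set.mem_Icc, forall_true_left,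
    abs_le]
  exact forall_congr' fun i => by constructor <;> intro h <;> constructor <;> linarith [h.1, h.2]

lemma isCompact_cube (c : Fin n → ℝ) (l : ℝ) : IsCompact (Cube n c l) := by
  rw [cube_eq_pi]; exact isCompact_univ_pi fun i => isCompact_Icc

lemma isClosed_cube (c : Fin n → ℝ) (l : ℝ) : IsClosed (Cube n c l) := by
  rw [cube_eq_pi]; exact isClosed_set_pi fun i _ => isClosed_Icc

lemma measurableSet_cube {c : Fin n → ℝ} {l : ℝ} : MeasurableSet (Cube n c l) :=
  (isClosed_cube c l).measurableSet

lemma center_mem_cube {c : Fin n → ℝ} {l : ℝ} (hl : 0 ≤ l) : c ∈ Cube n c l := by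
  intro i; simpa using by linarith

lemma cube_subset_cube {c : Fin n → ℝ} {l₁ l₂ : ℝ} (h : l₁ ≤ l₂) :
    Cube n c l₁ ⊆ Cube n c l₂ := fun x hx i => (hx i).trans (by linarith)

/-! ### The coefficient space and evaluation map -/

def Psi (n κ : ℕ) (a : (Fin n → Fin κ) → ℝ) (x : Fin n → ℝ) : ℝ :=
  ∑ b : Fin n → Fin κ, a b * ∏ i, x i ^ (b i : ℕ)

def toF (b : Fin n → Fin κ) : Fin n →₀ ℕ := Finsupp.equivFunOnFinite.symm (fun i => (b i : ℕ))

lemma toF_injective : Function.Injective (toF (n := n) (κ := κ)) := by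
  intro b b' h
  funext i
  have := congrArg (fun m => m i) h
  simpa [toF, Fin.val_injective.eq_iff] using this

lemma exists_repr (p : MvPolynomial (Fin n) ℝ) (hp : p.totalDegree < κ) :
    ∃ a, ∀ x, eval x p = Psi n κ a x := by
  classical
  refine ⟨fun b => coeff (toF b) p, fun x => ?_⟩
  rw [eval_eq']
  have himg : p.support ⊆ Finset.univ.image (toF (n := n) (κ := κ)) := by
    intro d hd
    have hdi : ∀ i, d i < κ := by
      intro i
      rcases Nat.eq_zero_or_pos (d i) with h0 | h0
      · omega
      · have hi : i ∈ d.support := Finsupp.mem_support_iff.mpr (by omega)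
        have h1 : d i ≤ d.sum fun _ e => e := by
          rw [Finsupp.sum]
          exact Finset.single_le_sum (fun j _ => Nat.zero_le _) hi
        exact lt_of_le_of_lt (h1.trans (le_totalDegree hd)) hp
    refine Finset.mem_image.mpr ⟨fun i => ⟨d i, hdi i⟩, Finset.mem_univ _, ?_⟩
    ext i; rfl
  rw [Finset.sum_subset himg]
  · rw [Finset.sum_image (fun b _ b' _ h => toF_injective h), Psi]
    rfl
  · intro m _ hm
    simp [MvPolynomial.notMem_support_iff.mp hm]

lemma psi_eq_eval (a : (Fin n → Fin κ) → ℝ) (x : Fin n → ℝ) :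
    Psi n κ a x = eval x (∑ b : Fin n → Fin κ, monomial (toF b) (a b)) := by
  rw [map_sum, Psi]
  refine Finset.sum_congr rfl fun b _ => ?_
  rw [eval_monomial]
  congr 1
  rw [Finsupp.prod_fintype]
  · rfl
  · intro i; exact pow_zero _

lemma psi_zero_of_vanish (a : (Fin n → Fin κ) → ℝ)
    (h : ∀ x ∈ Cube n 0 1, Psi n κ a x = 0) : a = 0 := by
  classical
  set q : MvPolynomial (Fin n) ℝ := ∑ b : Fin n → Fin κ, monomial (toF b) (a b) with hq
  have hanal : AnalyticOnNhd ℝ (fun x : Fin n → ℝ => eval x q) Set.univ := by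
    simpa using AnalyticOnNhd.eval_continuousLinearMap
      (ContinuousLinearMap.id ℝ (Fin n → ℝ)) q
  have hz : ∀ x, eval x q = 0 := by
    have hev : (fun x : Fin n → ℝ => eval x q) =ᶠ[nhds 0] 0 := by
      have hball : Metric.ball (0 : Fin n → ℝ) (1/2) ∈ nhds (0 : Fin n → ℝ) :=
        Metric.ball_mem_nhds _ (by norm_num)
      refine Filter.eventuallyEq_of_mem hball fun y hy => ?_
      have hycube : y ∈ Cube n 0 1 := by
        intro i
        have h1 : dist (y i) ((0 : Fin n → ℝ) i) ≤ dist y 0 := dist_le_pi_dist y 0 i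
        have h2 : dist y 0 < 1/2 := Metric.mem_ball.mp hy
        simp only [Real.dist_eq, Pi.zero_apply] at h1 ⊢
        calc |y i - 0| ≤ dist y 0 := by simpa using h1
        _ ≤ 1 / 2 := h2.le
      have := h y hycube
      rw [psi_eq_eval, ← hq] at this
      simpa using this
    have := hanal.eqOn_zero_of_preconnected_of_eventuallyEq_zero
      isPreconnected_univ (Set.mem_univ (0 : Fin n → ℝ)) hev
    intro x
    simpa using this (Set.mem_univ x)
  have hq0 : q = 0 := by
    apply MvPolynomial.funext
    intro x
    simpa using hz x
  funext b
  have : coeff (toF b) q = a b := by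
    rw [hq, MvPolynomial.coeff_sum]
    rw [Finset.sum_eq_single b]
    · simp [coeff_monomial]
    · intro b' _ hne
      rw [coeff_monomial, if_neg (fun hc => hne (toF_injective hc))]
    · intro hb; exact absurd (Finset.mem_univ b) hb
  rw [hq0] at this
  simpa using this.symm

/-! ### Elementary Lipschitz estimates -/

lemma abs_pow_sub_pow {u v : ℝ} (hu : |u| ≤ 1) (hv : |v| ≤ 1) (k : ℕ) :
    |u ^ k - v ^ k| ≤ k * |u - v| := by
  induction k with
  | zero => simp
  | succ k ih =>
    have key : u ^ (k+1) - v ^ (k+1) = u * (u ^ k - v ^ k) + (u - v) * v ^ k := by ring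
    have hvk : |v ^ k| ≤ 1 := by
      rw [abs_pow]; exact pow_le_one₀ (abs_nonneg _) hv
    calc |u ^ (k+1) - v ^ (k+1)| ≤ |u * (u ^ k - v ^ k)| + |(u - v) * v ^ k| := by
          rw [key]; exact abs_add_le _ _
      _ ≤ 1 * (k * |u - v|) + |u - v| * 1 := by
          rw [abs_mul, abs_mul]
          exact add_le_add (mul_le_mul hu ih (abs_nonneg _) zero_le_one)
            (mul_le_mul_of_nonneg_left hvk (abs_nonneg _))
      _ = (k + 1 : ℕ) * |u - v| := by push_cast; ring

lemma abs_prod_sub_prod {ι : Type*} (s : Finset ι) (u v : ι → ℝ)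
    (hu : ∀ i, |u i| ≤ 1) (hv : ∀ i, |v i| ≤ 1) :
    |∏ i ∈ s, u i - ∏ i ∈ s, v i| ≤ ∑ i ∈ s, |u i - v i| := by
  classical
  induction s using Finset.induction with
  | empty => simp
  | insert a s hx ih =>
    rw [Finset.prod_insert hx, Finset.prod_insert hx, Finset.sum_insert hx]
    have key : u a * ∏ i ∈ s, u i - v a * ∏ i ∈ s, v i
        = (u a - v a) * ∏ i ∈ s, u i + v a * (∏ i ∈ s, u i - ∏ i ∈ s, v i) := by ring
    have hpu : |∏ i ∈ s, u i| ≤ 1 := by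
      rw [Finset.abs_prod]
      exact Finset.prod_le_one (fun i _ => abs_nonneg _) (fun i _ => hu i)
    calc |u a * ∏ i ∈ s, u i - v a * ∏ i ∈ s, v i|
        ≤ |(u a - v a) * ∏ i ∈ s, u i| + |v a * (∏ i ∈ s, u i - ∏ i ∈ s, v i)| := by
          rw [key]; exact abs_add_le _ _
      _ ≤ |u a - v a| * 1 + 1 * ∑ i ∈ s, |u i - v i| := by
          rw [abs_mul, abs_mul]
          exact add_le_add (mul_le_mul_of_nonneg_left hpu (abs_nonneg _))
            (mul_le_mul (hv a) ih (abs_nonneg _) zero_le_one)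
      _ = |u a - v a| + ∑ i ∈ s, |u i - v i| := by ring

lemma abs_le_one_of_mem_cube {x : Fin n → ℝ} (hx : x ∈ Cube n 0 1) (i : Fin n) : |x i| ≤ 1 := by
  have := hx i
  simp only [Pi.zero_apply, sub_zero] at this
  linarith

lemma psi_smul (c : ℝ) (a : (Fin n → Fin κ) → ℝ) (x : Fin n → ℝ) :
    Psi n κ (c • a) x = c * Psi n κ a x := by
  simp [Psi, Finset.mul_sum, mul_assoc]

lemma psi_sub (a a' : (Fin n → Fin κ) → ℝ) (x : Fin n → ℝ) :
    Psi n κ (a - a') x = Psi n κ a x - Psi n κ a' x := by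
  simp [Psi, sub_mul, Finset.sum_sub_distrib]

lemma abs_psi_le (a : (Fin n → Fin κ) → ℝ) {x : Fin n → ℝ} (hx : x ∈ Cube n 0 1) :
    |Psi n κ a x| ≤ (Fintype.card (Fin n → Fin κ) : ℝ) * ‖a‖ := by
  calc |Psi n κ a x| ≤ ∑ b : Fin n → Fin κ, |a b * ∏ i, x i ^ (b i : ℕ)| :=
        Finset.abs_sum_le_sum_abs _ _
    _ ≤ ∑ _b : Fin n → Fin κ, ‖a‖ * 1 := by
        refine Finset.sum_le_sum fun b _ => ?_
        rw [abs_mul]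
        refine mul_le_mul ?_ ?_ (abs_nonneg _) (norm_nonneg _)
        · exact norm_le_pi_norm a b
        · rw [Finset.abs_prod]
          refine Finset.prod_le_one (fun i _ => abs_nonneg _) fun i _ => ?_
          rw [abs_pow]
          exact pow_le_one₀ (abs_nonneg _) (abs_le_one_of_mem_cube hx i)
    _ = (Fintype.card (Fin n → Fin κ) : ℝ) * ‖a‖ := by
        rw [Finset.sum_const, Finset.card_univ, nsmul_eq_mul, mul_one]

lemma abs_psi_sub_psi (a : (Fin n → Fin κ) → ℝ) {x y : Fin n → ℝ}
    (hx : x ∈ Cube n 0 1) (hy : y ∈ Cube n 0 1) :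
    |Psi n κ a x - Psi n κ a y| ≤
      (Fintype.card (Fin n → Fin κ) : ℝ) * (n * κ) * ‖a‖ * dist x y := by
  have key : ∀ b : Fin n → Fin κ,
      |∏ i, x i ^ (b i : ℕ) - ∏ i, y i ^ (b i : ℕ)| ≤ (n * κ : ℝ) * dist x y := by
    intro b
    calc |∏ i, x i ^ (b i : ℕ) - ∏ i, y i ^ (b i : ℕ)|
        ≤ ∑ i, |x i ^ (b i : ℕ) - y i ^ (b i : ℕ)| := by
          refine abs_prod_sub_prod _ _ _ (fun i => ?_) (fun i => ?_) <;>
            rw [abs_pow] <;>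
            exact pow_le_one₀ (abs_nonneg _)
              (by first
                | exact abs_le_one_of_mem_cube hx i
                | exact abs_le_one_of_mem_cube hy i)
      _ ≤ ∑ _i : Fin n, (κ : ℝ) * dist x y := by
          refine Finset.sum_le_sum fun i _ => ?_
          calc |x i ^ (b i : ℕ) - y i ^ (b i : ℕ)| ≤ (b i : ℕ) * |x i - y i| :=
                abs_pow_sub_pow (abs_le_one_of_mem_cube hx i) (abs_le_one_of_mem_cube hy i) _
            _ ≤ (κ : ℝ) * dist x y := by
                refine mul_le_mul ?_ ?_ (abs_nonneg _) (by positivity)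
                · exact_mod_cast (b i).2.le
                · rw [← Real.dist_eq]; exact dist_le_pi_dist x y i
      _ = (n * κ : ℝ) * dist x y := by
          rw [Finset.sum_const, Finset.card_univ, nsmul_eq_mul]
          simp; ring
  calc |Psi n κ a x - Psi n κ a y|
      = |∑ b : Fin n → Fin κ, a b * (∏ i, x i ^ (b i : ℕ) - ∏ i, y i ^ (b i : ℕ))| := by
        rw [Psi, Psi, ← Finset.sum_sub_distrib]
        congr 1
        exact Finset.sum_congr rfl fun b _ => by ring
    _ ≤ ∑ b : Fin n → Fin κ, |a b * (∏ i, x i ^ (b i : ℕ) - ∏ i, y i ^ (b i : ℕ))| :=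
        Finset.abs_sum_le_sum_abs _ _
    _ ≤ ∑ _b : Fin n → Fin κ, ‖a‖ * ((n * κ : ℝ) * dist x y) := by
        refine Finset.sum_le_sum fun b _ => ?_
        rw [abs_mul]
        exact mul_le_mul (norm_le_pi_norm a b) (key b) (abs_nonneg _) (norm_nonneg _)
    _ = (Fintype.card (Fin n → Fin κ) : ℝ) * (n * κ) * ‖a‖ * dist x y := by
        rw [Finset.sum_const, Finset.card_univ, nsmul_eq_mul]
        ring

/-! ### Norm equivalence via compactness -/

lemma norm_le_of_max (hκ : 0 < κ) :
    ∃ m : ℝ, 0 < m ∧ ∀ (a : (Fin n → Fin κ) → ℝ) (x₀ : Fin n → ℝ), x₀ ∈ Cube n 0 1 →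
      (∀ z ∈ Cube n 0 1, |Psi n κ a z| ≤ |Psi n κ a x₀|) → m * ‖a‖ ≤ |Psi n κ a x₀| := by
  classical
  set D : ℝ := (Fintype.card (Fin n → Fin κ) : ℝ) with hD
  have hcube0 : (0 : Fin n → ℝ) ∈ Cube n 0 1 := by intro i; norm_num
  set g : ((Fin n → Fin κ) → ℝ) → ℝ :=
    fun a => sSup ((fun x => |Psi n κ a x|) '' Cube n 0 1) with hg
  have hne : ∀ a : (Fin n → Fin κ) → ℝ, ((fun x => |Psi n κ a x|) '' Cube n 0 1).Nonempty :=
    fun a => ⟨_, Set.mem_image_of_mem _ hcube0⟩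
  have hbdd : ∀ a : (Fin n → Fin κ) → ℝ,
      BddAbove ((fun x => |Psi n κ a x|) '' Cube n 0 1) := by
    intro a
    refine ⟨D * ‖a‖, ?_⟩
    rintro _ ⟨x, hx, rfl⟩
    exact abs_psi_le a hx
  have hle : ∀ (a : (Fin n → Fin κ) → ℝ) (x), x ∈ Cube n 0 1 → |Psi n κ a x| ≤ g a :=
    fun a x hx => le_csSup (hbdd a) (Set.mem_image_of_mem _ hx)
  have hsup_le : ∀ (a : (Fin n → Fin κ) → ℝ) (c : ℝ),
      (∀ x ∈ Cube n 0 1, |Psi n κ a x| ≤ c) → g a ≤ c := by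
    intro a c hc
    refine csSup_le (hne a) ?_
    rintro _ ⟨x, hx, rfl⟩; exact hc x hx
  have hcont : Continuous g := by
    refine (LipschitzWith.of_le_add_mul' D fun a a' => ?_).continuous
    refine hsup_le _ _ fun x hx => ?_
    have h1 : |Psi n κ a x| ≤ |Psi n κ a' x| + |Psi n κ a x - Psi n κ a' x| := by
      calc |Psi n κ a x| = |Psi n κ a' x + (Psi n κ a x - Psi n κ a' x)| := by congr 1; ring
        _ ≤ _ := abs_add_le _ _
    have h3 : |Psi n κ a x - Psi n κ a' x| ≤ D * ‖a - a'‖ := by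
      rw [← psi_sub]; exact abs_psi_le _ hx
    calc |Psi n κ a x| ≤ |Psi n κ a' x| + |Psi n κ a x - Psi n κ a' x| := h1
      _ ≤ g a' + D * ‖a - a'‖ := add_le_add (hle a' x hx) h3
      _ = g a' + D * dist a a' := by rw [dist_eq_norm]
  haveI : Nonempty (Fin n → Fin κ) := ⟨fun _ => ⟨0, hκ⟩⟩
  have hsph : (Metric.sphere (0 : (Fin n → Fin κ) → ℝ) 1).Nonempty :=
    NormedSpace.sphere_nonempty.mpr zero_le_one
  obtain ⟨a₀, ha₀, hmin⟩ := (isCompact_sphere (0 : (Fin n → Fin κ) → ℝ) 1).exists_isMinOn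
    hsph hcont.continuousOn
  have hm : 0 < g a₀ := by
    rcases lt_or_eq_of_le (le_trans (abs_nonneg _) (hle a₀ 0 hcube0)) with h | h
    · exact h
    · exfalso
      have hz : ∀ x ∈ Cube n 0 1, Psi n κ a₀ x = 0 := by
        intro x hx
        have := hle a₀ x hx
        rw [← h] at this
        exact abs_eq_zero.mp (le_antisymm this (abs_nonneg _))
      have := psi_zero_of_vanish a₀ hz
      have hna : ‖a₀‖ = 1 := by simpa using ha₀
      rw [this] at hna
      simp at hna
  refine ⟨g a₀, hm, fun a x₀ hx₀ hmax => ?_⟩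
  rcases eq_or_ne a 0 with rfl | ha
  · simp only [norm_zero, mul_zero]
    exact abs_nonneg _
  · have hna : 0 < ‖a‖ := norm_pos_iff.mpr ha
    set a' := ‖a‖⁻¹ • a with ha'
    have ha'sph : a' ∈ Metric.sphere (0 : (Fin n → Fin κ) → ℝ) 1 := by
      simp [ha', norm_smul, abs_of_nonneg (inv_nonneg.mpr hna.le), inv_mul_cancel₀ hna.ne']
    have h1 : g a₀ ≤ g a' := hmin ha'sph
    have h2 : g a' ≤ ‖a‖⁻¹ * |Psi n κ a x₀| := by
      refine hsup_le _ _ fun x hx => ?_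
      rw [ha', psi_smul, abs_mul, abs_of_nonneg (inv_nonneg.mpr hna.le)]
      exact mul_le_mul_of_nonneg_left (hmax x hx) (inv_nonneg.mpr hna.le)
    have := h1.trans h2
    calc g a₀ * ‖a‖ ≤ (‖a‖⁻¹ * |Psi n κ a x₀|) * ‖a‖ :=
          mul_le_mul_of_nonneg_right this hna.le
      _ = |Psi n κ a x₀| := by field_simp

/-! ### The Remez-type lemma on the unit cube -/

lemma remez_unit (hκ : 0 < κ) :
    ∃ ε : ℝ, 0 < ε ∧ ε ≤ 1 ∧ ∀ p : MvPolynomial (Fin n) ℝ, p.totalDegree < κ →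
      ∀ x₀ ∈ Cube n 0 1, (∀ z ∈ Cube n 0 1, |eval z p| ≤ |eval x₀ p|) →
      ∀ y ∈ Cube n 0 1, dist y x₀ ≤ ε → |eval x₀ p| ≤ 2 * |eval y p| := by
  obtain ⟨m, hm, hnorm⟩ := norm_le_of_max (n := n) hκ
  set L : ℝ := (Fintype.card (Fin n → Fin κ) : ℝ) * (n * κ) + 1 with hL
  have hL0 : 0 < L := by positivity
  refine ⟨min 1 (m / (2 * L)), by positivity, min_le_left _ _, ?_⟩
  intro p hp x₀ hx₀ hmax y hy hdist
  obtain ⟨a, ha⟩ := exists_repr p hp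
  have hmax' : ∀ z ∈ Cube n 0 1, |Psi n κ a z| ≤ |Psi n κ a x₀| := by
    intro z hz; rw [← ha, ← ha]; exact hmax z hz
  have hna : m * ‖a‖ ≤ |Psi n κ a x₀| := hnorm a x₀ hx₀ hmax'
  set s : ℝ := |eval x₀ p| with hs
  have hs0 : 0 ≤ s := abs_nonneg _
  have hsx : |Psi n κ a x₀| = s := by rw [hs, ha]
  have hdiff : |eval y p - eval x₀ p| ≤ s / 2 := by
    have h1 : |Psi n κ a y - Psi n κ a x₀| ≤
        (Fintype.card (Fin n → Fin κ) : ℝ) * (n * κ) * ‖a‖ * dist y x₀ :=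
      abs_psi_sub_psi a hy hx₀
    have h2 : (Fintype.card (Fin n → Fin κ) : ℝ) * (n * κ) * ‖a‖ * dist y x₀
        ≤ L * ‖a‖ * (m / (2 * L)) := by
      have hd0 : (0:ℝ) ≤ dist y x₀ := dist_nonneg
      have hdle : dist y x₀ ≤ m / (2 * L) := hdist.trans (min_le_right _ _)
      have hcard : (Fintype.card (Fin n → Fin κ) : ℝ) * (n * κ) ≤ L := by
        rw [hL]; linarith
      calc (Fintype.card (Fin n → Fin κ) : ℝ) * (n * κ) * ‖a‖ * dist y x₀
          ≤ L * ‖a‖ * dist y x₀ :=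
            mul_le_mul_of_nonneg_right (mul_le_mul_of_nonneg_right hcard (norm_nonneg a)) hd0
        _ ≤ L * ‖a‖ * (m / (2 * L)) :=
            mul_le_mul_of_nonneg_left hdle (by positivity)
    have h3 : L * ‖a‖ * (m / (2 * L)) = (m * ‖a‖) / 2 := by field_simp
    have h4 : (m * ‖a‖) / 2 ≤ s / 2 := by
      rw [hsx] at hna
      linarith
    rw [ha y, ha x₀, ← hsx]
    calc |Psi n κ a y - Psi n κ a x₀| ≤ L * ‖a‖ * (m / (2 * L)) := h1.trans h2
      _ ≤ |Psi n κ a x₀| / 2 := by rw [h3]; rw [hsx]; exact h4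
  have h5 : s - s / 2 ≤ |eval y p| := by
    have := abs_sub_abs_le_abs_sub (eval x₀ p) (eval y p)
    rw [abs_sub_comm] at this
    linarith [this, hdiff]
  linarith

/-! ### Affine substitution -/

def subst (c : Fin n → ℝ) (l : ℝ) (p : MvPolynomial (Fin n) ℝ) : MvPolynomial (Fin n) ℝ :=
  bind₁ (fun i => C (c i) + C l * X i) p

lemma eval_subst (c : Fin n → ℝ) (l : ℝ) (p : MvPolynomial (Fin n) ℝ) (z : Fin n → ℝ) :
    eval z (subst c l p) = eval (fun i => c i + l * z i) p := by
  have h := eval₂Hom_bind₁ (RingHom.id ℝ) z (fun i => C (c i) + C l * X i) p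
  have he : (eval z : MvPolynomial (Fin n) ℝ →+* ℝ) = eval₂Hom (RingHom.id ℝ) z := rfl
  rw [subst, he, h, ← he]
  simp

lemma totalDegree_subst (c : Fin n → ℝ) (l : ℝ) (p : MvPolynomial (Fin n) ℝ) :
    (subst c l p).totalDegree ≤ p.totalDegree := by
  classical
  rw [subst]
  conv_lhs => rw [p.as_sum]
  rw [map_sum]
  refine totalDegree_finsetSum_le fun v hv => ?_
  rw [bind₁_monomial]
  refine (totalDegree_mul _ _).trans ?_
  rw [totalDegree_C, zero_add]
  refine (totalDegree_finset_prod _ _).trans ?_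
  calc ∑ i ∈ v.support, ((C (c i) + C l * X i) ^ v i).totalDegree
      ≤ ∑ i ∈ v.support, v i * 1 := by
        refine Finset.sum_le_sum fun i _ => ?_
        refine (totalDegree_pow _ _).trans ?_
        refine Nat.mul_le_mul_left _ ?_
        refine (totalDegree_add _ _).trans ?_
        simp only [totalDegree_C]
        refine max_le (Nat.zero_le _) ?_
        refine (totalDegree_mul _ _).trans ?_
        simp [totalDegree_X]
    _ = v.sum fun _ e => e := by simp [Finsupp.sum]
    _ ≤ p.totalDegree := le_totalDegree hv

/-! ### The Remez-type lemma on a general cube -/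

lemma remez (hκ : 0 < κ) :
    ∃ ε : ℝ, 0 < ε ∧ ε ≤ 1 ∧ ∀ p : MvPolynomial (Fin n) ℝ, p.totalDegree < κ →
      ∀ (c : Fin n → ℝ) (l : ℝ), 0 < l → ∀ x₀ ∈ Cube n c l,
      (∀ z ∈ Cube n c l, |eval z p| ≤ |eval x₀ p|) →
      ∃ c' : Fin n → ℝ, Cube n c' (ε * l) ⊆ Cube n c l ∧ (∀ i, |c' i - c i| ≤ l / 2) ∧
        ∀ y ∈ Cube n c' (ε * l), |eval x₀ p| ≤ 2 * |eval y p| := by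
  obtain ⟨ε, hε0, hε1, hunit⟩ := remez_unit (n := n) hκ
  refine ⟨ε, hε0, hε1, ?_⟩
  intro p hp c l hl x₀ hx₀ hmax
  set q := subst c l p with hq
  have hqd : q.totalDegree < κ := lt_of_le_of_lt (totalDegree_subst c l p) hp
  set z₀ : Fin n → ℝ := fun i => (x₀ i - c i) / l with hz₀def
  have hφz₀ : (fun i => c i + l * z₀ i) = x₀ := by
    funext i; simp only [hz₀def]; field_simp; ring
  have hz₀ : z₀ ∈ Cube n 0 1 := by
    intro i
    have h1 := hx₀ i
    simp only [hz₀def, Pi.zero_apply, sub_zero, abs_div, abs_of_pos hl]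
    rw [div_le_iff₀ hl]
    linarith
  have hz₀b : ∀ i, -(1/2) ≤ z₀ i ∧ z₀ i ≤ 1/2 := by
    intro i
    have h := hz₀ i
    simp only [Pi.zero_apply, sub_zero] at h
    have := abs_le.mp h
    constructor <;> linarith [this.1, this.2]
  have hmaxq : ∀ z ∈ Cube n 0 1, |eval z q| ≤ |eval z₀ q| := by
    intro z hz
    rw [hq, eval_subst, eval_subst, hφz₀]
    refine hmax _ ?_
    intro i
    have h1' := hz i
    simp only [Pi.zero_apply, sub_zero] at h1'
    have h1 := abs_le.mp h1'
    have : |c i + l * z i - c i| = l * |z i| := by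
      rw [show c i + l * z i - c i = l * z i by ring, abs_mul, abs_of_pos hl]
    rw [this]
    calc l * |z i| ≤ l * (1/2) := by
          refine mul_le_mul_of_nonneg_left ?_ hl.le
          rw [abs_le]; constructor <;> linarith [h1.1, h1.2]
      _ = l / 2 := by ring
  set γ : Fin n → ℝ := fun i => min (max (z₀ i) (ε/2 - 1/2)) (1/2 - ε/2) with hγdef
  have hγ1 : ∀ i, |γ i| ≤ 1/2 - ε/2 := by
    intro i
    rw [abs_le]
    constructor
    · refine le_min ?_ ?_
      · exact le_trans (by linarith) (le_max_right _ _)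
      · linarith
    · exact min_le_right _ _
  have hγ2 : ∀ i, |γ i - z₀ i| ≤ ε/2 := by
    intro i
    obtain ⟨hb1, hb2⟩ := hz₀b i
    rw [abs_le]
    constructor
    · have : z₀ i - ε/2 ≤ γ i :=
        le_min (le_trans (by linarith) (le_max_left _ _)) (by linarith)
      linarith
    · have : γ i ≤ z₀ i + ε/2 :=
        (min_le_left _ _).trans (max_le (by linarith) (by linarith))
      linarith
  set c' : Fin n → ℝ := fun i => c i + l * γ i with hc'def
  have hc'c : ∀ i, |c' i - c i| ≤ l * (1/2 - ε/2) := by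
    intro i
    rw [hc'def]
    rw [show c i + l * γ i - c i = l * γ i by ring, abs_mul, abs_of_pos hl]
    exact mul_le_mul_of_nonneg_left (hγ1 i) hl.le
  have hsub : Cube n c' (ε * l) ⊆ Cube n c l := by
    intro y hy i
    have h1 := hy i
    have h2 := hc'c i
    calc |y i - c i| ≤ |y i - c' i| + |c' i - c i| := by
          have := abs_add_le (y i - c' i) (c' i - c i)
          simpa using this
      _ ≤ ε * l / 2 + l * (1/2 - ε/2) := add_le_add h1 h2
      _ = l / 2 := by ring
  refine ⟨c', hsub, fun i => (hc'c i).trans (by nlinarith), ?_⟩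
  intro y hy
  set zy : Fin n → ℝ := fun i => (y i - c i) / l with hzydef
  have hφzy : (fun i => c i + l * zy i) = y := by
    funext i; simp only [hzydef]; field_simp; ring
  have hzyγ : ∀ i, |zy i - γ i| ≤ ε/2 := by
    intro i
    have h1 := hy i
    have : zy i - γ i = (y i - c' i) / l := by
      rw [hzydef, hc'def]; field_simp; ring
    rw [this, abs_div, abs_of_pos hl, div_le_iff₀ hl]
    calc |y i - c' i| ≤ ε * l / 2 := h1
      _ = ε / 2 * l := by ring
  have hzycube : zy ∈ Cube n 0 1 := by
    intro i
    have h1 := hzyγ i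
    have h2 := hγ1 i
    calc |zy i - (0 : Fin n → ℝ) i| = |zy i| := by simp
      _ ≤ |zy i - γ i| + |γ i| := by
          have := abs_add_le (zy i - γ i) (γ i)
          simpa using this
      _ ≤ ε/2 + (1/2 - ε/2) := add_le_add h1 h2
      _ = 1 / 2 := by ring
  have hdist : dist zy z₀ ≤ ε := by
    rw [dist_pi_le_iff hε0.le]
    intro i
    rw [Real.dist_eq]
    calc |zy i - z₀ i| ≤ |zy i - γ i| + |γ i - z₀ i| := by
          have := abs_add_le (zy i - γ i) (γ i - z₀ i)
          simpa using this
      _ ≤ ε/2 + ε/2 := add_le_add (hzyγ i) (hγ2 i)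
      _ = ε := by ring
  have := hunit q hqd z₀ hz₀ hmaxq zy hzycube hdist
  rw [hq, eval_subst, eval_subst, hφz₀, hφzy] at this
  exact this

/-! ### Measure-theoretic lemmas -/

lemma doubling_pow {Cd : ℝ} {ω : Measure (Fin n → ℝ)} (hd : IsDoubling ω Cd)
    (cJ : Fin n → ℝ) {l' : ℝ} (hl' : 0 < l') (m : ℕ) :
    ω (Cube n cJ (2 ^ m * l')) ≤ (ENNReal.ofReal (max Cd 1)) ^ m * ω (Cube n cJ l') := by
  induction m with
  | zero => simp
  | succ m ih =>
    have h1 : (2:ℝ) ^ (m+1) * l' = 2 * (2 ^ m * l') := by ring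
    rw [h1]
    calc ω (Cube n cJ (2 * (2 ^ m * l')))
        ≤ ENNReal.ofReal Cd * ω (Cube n cJ (2 ^ m * l')) := hd cJ _ (by positivity)
      _ ≤ ENNReal.ofReal (max Cd 1) * ((ENNReal.ofReal (max Cd 1)) ^ m * ω (Cube n cJ l')) :=
          mul_le_mul' (ENNReal.ofReal_le_ofReal (le_max_left _ _)) ih
      _ = (ENNReal.ofReal (max Cd 1)) ^ (m+1) * ω (Cube n cJ l') := by
          rw [pow_succ]; ring

lemma bessel {ω : Measure (Fin n → ℝ)} {I : Set (Fin n → ℝ)}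
    {f g : (Fin n → ℝ) → ℝ} (hf : MemLp f 2 (ω.restrict I)) (hg : MemLp g 2 (ω.restrict I))
    (horth : ∫ x in I, (f x - g x) * g x ∂ω = 0) :
    ∫ x in I, g x ^ 2 ∂ω ≤ ∫ x in I, f x ^ 2 ∂ω := by
  have hf2 : Integrable (fun x => f x ^ 2) (ω.restrict I) := hf.integrable_sq
  have hg2 : Integrable (fun x => g x ^ 2) (ω.restrict I) := hg.integrable_sq
  have hfg : Integrable (fun x => f x * g x) (ω.restrict I) := by
    refine Integrable.mono' ((hf2.add hg2).div_const 2) (hf.1.mul hg.1) ?_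
    refine Filter.Eventually.of_forall fun x => ?_
    rw [Real.norm_eq_abs, abs_mul]
    simp only [Pi.add_apply]
    have h1 : 0 ≤ (|f x| - |g x|)^2 := sq_nonneg _
    have h2 : |f x|^2 = f x ^2 := sq_abs _
    have h3 : |g x|^2 = g x ^2 := sq_abs _
    nlinarith [abs_nonneg (f x), abs_nonneg (g x)]
  have h1 : ∫ x in I, (f x - g x) * g x ∂ω
      = (∫ x in I, f x * g x ∂ω) - ∫ x in I, g x ^ 2 ∂ω := by
    rw [← integral_sub hfg hg2]
    exact integral_congr_ae (Filter.Eventually.of_forall fun x => by ring)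
  have hfg_eq : ∫ x in I, f x * g x ∂ω = ∫ x in I, g x ^ 2 ∂ω := by
    rw [horth] at h1; linarith [h1.symm]
  have h2 : (0:ℝ) ≤ ∫ x in I, (f x - g x) ^ 2 ∂ω :=
    integral_nonneg fun x => sq_nonneg _
  have hfg2 : Integrable (fun x => 2 * (f x * g x)) (ω.restrict I) := hfg.const_mul 2
  have h3 : ∫ x in I, (f x - g x) ^ 2 ∂ω
      = (∫ x in I, f x ^ 2 ∂ω) - (2 * ∫ x in I, f x * g x ∂ω) + ∫ x in I, g x ^ 2 ∂ω := by
    have e1 : ∫ x in I, (f x - g x)^2 ∂ω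
        = ∫ x in I, (f x ^2 - 2*(f x * g x) + g x ^2) ∂ω :=
      integral_congr_ae (Filter.Eventually.of_forall fun x => by ring)
    have hA : Integrable (fun x => f x ^ 2 - 2 * (f x * g x)) (ω.restrict I) := hf2.sub hfg2
    rw [e1, integral_add hA hg2, integral_sub hf2 hfg2, MeasureTheory.integral_const_mul]
  rw [hfg_eq] at h3
  linarith

end PolyProjAux

/-- For a doubling measure `ω`, the orthogonal projection `𝔼^ω_{I;κ} f` of
`f ∈ L²_loc(ω)` onto polynomials of degree `< κ` on a cube `I` (characterized by
the orthogonality relations) satisfies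
`‖𝔼^ω_{I;κ} f‖_{L^∞(I,ω)} ≤ C ((1/|I|_ω) ∫_I |f|² dω)^{1/2}`. -/
theorem polynomial_projection_sup_bound (n κ : ℕ) (Cd : ℝ) :
    ∃ C : ℝ, 0 < C ∧
      ∀ (ω : Measure (Fin n → ℝ)), IsLocallyFiniteMeasure ω → IsDoubling ω Cd →
      ∀ (c : Fin n → ℝ) (l : ℝ), 0 < l →
      ∀ (f : (Fin n → ℝ) → ℝ) (p : MvPolynomial (Fin n) ℝ),
        Measurable f → MemLp f 2 (ω.restrict (Cube n c l)) →
        p.totalDegree < κ →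
        -- `eval p` is the orthogonal projection of `f` onto polynomials of degree `< κ` on `I`
        (∀ q : MvPolynomial (Fin n) ℝ, q.totalDegree < κ →
          ∫ x in Cube n c l, (f x - MvPolynomial.eval x p) * MvPolynomial.eval x q ∂ω = 0) →
        essSup (fun x => ENNReal.ofReal |MvPolynomial.eval x p|)
            (ω.restrict (Cube n c l)) ≤
          ENNReal.ofReal C *
            ((∫⁻ x in Cube n c l, ENNReal.ofReal ((f x) ^ 2) ∂ω) /
              ω (Cube n c l)) ^ ((1 : ℝ) / 2) := by
  classical
  rcases Nat.eq_zero_or_pos κ with rfl | hκ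
  · exact ⟨1, one_pos, fun ω _ _ c l _ f p _ _ hdeg _ => absurd hdeg (Nat.not_lt_zero _)⟩
  obtain ⟨ε, hε0, hε1, hrem⟩ := PolyProjAux.remez (n := n) hκ
  obtain ⟨m, hm⟩ := pow_unbounded_of_one_lt (2 / ε) one_lt_two
  set M : ℝ := max Cd 1 with hM
  have hM1 : (1:ℝ) ≤ M := le_max_right _ _
  have hMm : (0:ℝ) < M ^ m := by positivity
  refine ⟨2 * Real.sqrt (M ^ m), by positivity, ?_⟩
  intro ω hloc hdub c l hl f p hfm hf2 hdeg horth
  haveI := hloc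
  set I := Cube n c l with hI
  have hIfin : ω I < ⊤ := (PolyProjAux.isCompact_cube c l).measure_lt_top
  haveI : IsFiniteMeasure (ω.restrict I) := ⟨by rwa [Measure.restrict_apply_univ]⟩
  by_cases hW0 : ω I = 0
  · rw [Measure.restrict_eq_zero.mpr hW0, essSup_measure_zero]
    exact zero_le
  -- a maximizer of |eval p| on the cube
  have hcont : Continuous fun x : Fin n → ℝ => |MvPolynomial.eval x p| :=
    (MvPolynomial.continuous_eval p).abs
  obtain ⟨x₀, hx₀I, hx₀max⟩ := (PolyProjAux.isCompact_cube c l).exists_isMaxOn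
    ⟨c, PolyProjAux.center_mem_cube hl.le⟩ hcont.continuousOn
  have hmax : ∀ z ∈ I, |MvPolynomial.eval z p| ≤ |MvPolynomial.eval x₀ p| :=
    fun z hz => hx₀max hz
  set s := |MvPolynomial.eval x₀ p| with hs
  have hs0 : 0 ≤ s := abs_nonneg _
  obtain ⟨c', hJI, hc'c, hJlow⟩ := hrem p hdeg c l hl x₀ hx₀I hmax
  set J := Cube n c' (ε * l) with hJ
  -- doubling chain
  have hIJ2 : I ⊆ Cube n c' (2 ^ m * (ε * l)) := by
    intro x hx
    have hsub : I ⊆ Cube n c' (2 * l) := by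
      intro y hy i
      calc |y i - c' i| ≤ |y i - c i| + |c i - c' i| := by
            have := abs_add_le (y i - c i) (c i - c' i)
            simpa using this
        _ ≤ l/2 + l/2 := add_le_add (hy i) (by rw [abs_sub_comm]; exact hc'c i)
        _ = 2 * l / 2 := by ring
    refine PolyProjAux.cube_subset_cube ?_ (hsub hx)
    rw [div_lt_iff₀ hε0] at hm
    nlinarith
  have hJfin : ω J ≠ ⊤ := (lt_of_le_of_lt (measure_mono hJI) hIfin).ne
  have hchain : ω I ≤ ENNReal.ofReal (M ^ m) * ω J := by
    calc ω I ≤ ω (Cube n c' (2 ^ m * (ε * l))) := measure_mono hIJ2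
      _ ≤ (ENNReal.ofReal M) ^ m * ω J := PolyProjAux.doubling_pow hdub c' (by positivity) m
      _ = ENNReal.ofReal (M ^ m) * ω J := by
          rw [ENNReal.ofReal_pow (by linarith : (0:ℝ) ≤ M)]
  -- Bessel inequality
  have hmeasI : MeasurableSet I := PolyProjAux.measurableSet_cube
  have hp2 : MemLp (fun x => MvPolynomial.eval x p) 2 (ω.restrict I) := by
    refine MemLp.of_bound (MvPolynomial.continuous_eval p).aestronglyMeasurable s ?_
    refine (ae_restrict_mem hmeasI).mono fun x hx => ?_
    simpa [Real.norm_eq_abs] using hmax x hx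
  have hbessel := PolyProjAux.bessel hf2 hp2 (horth p hdeg)
  set F := ∫ x in I, f x ^ 2 ∂ω with hF
  set P := ∫ x in I, (MvPolynomial.eval x p) ^ 2 ∂ω with hP
  have hF0 : 0 ≤ F := integral_nonneg fun x => sq_nonneg _
  -- lower bound for P on the subcube J
  have hintp2 : IntegrableOn (fun x => (MvPolynomial.eval x p)^2) I ω := hp2.integrable_sq
  have hJmeas : MeasurableSet J := PolyProjAux.measurableSet_cube
  have hlow : (s/2)^2 * (ω J).toReal ≤ P := by
    have h1 : (s/2)^2 * (ω J).toReal ≤ ∫ x in J, (MvPolynomial.eval x p)^2 ∂ω := by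
      refine (le_of_eq ?_).trans (setIntegral_ge_of_const_le (c := (s/2)^2) hJmeas hJfin ?_ (hintp2.mono_set hJI))
      · rw [smul_eq_mul, mul_comm]; rfl
      intro y hy
      have h2 := hJlow y hy
      have h3 : s / 2 ≤ |MvPolynomial.eval y p| := by linarith
      calc (s/2)^2 ≤ |MvPolynomial.eval y p|^2 := by
            have := pow_le_pow_left₀ (by positivity : (0:ℝ) ≤ s/2) h3 2
            exact this
        _ = (MvPolynomial.eval y p)^2 := sq_abs _
    refine h1.trans ?_
    exact setIntegral_mono_set hintp2 (Filter.Eventually.of_forall fun x => sq_nonneg _)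
      (HasSubset.Subset.eventuallyLE hJI)
  -- real-number arithmetic
  set wI := (ω I).toReal with hwI
  set wJ := (ω J).toReal with hwJ
  have hwI0 : 0 < wI := ENNReal.toReal_pos hW0 hIfin.ne
  have hwJ0 : 0 ≤ wJ := ENNReal.toReal_nonneg
  have hchainR : wI ≤ M ^ m * wJ := by
    have h := ENNReal.toReal_mono (ENNReal.mul_ne_top ENNReal.ofReal_ne_top hJfin) hchain
    rwa [ENNReal.toReal_mul, ENNReal.toReal_ofReal (by positivity)] at h
  have hkey : s^2 * wI ≤ 4 * M^m * F := by
    calc s^2 * wI ≤ s^2 * (M^m * wJ) :=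
          mul_le_mul_of_nonneg_left hchainR (sq_nonneg s)
      _ = 4 * M^m * ((s/2)^2 * wJ) := by ring
      _ ≤ 4 * M^m * P := mul_le_mul_of_nonneg_left hlow (by positivity)
      _ ≤ 4 * M^m * F := mul_le_mul_of_nonneg_left hbessel (by positivity)
  have hsC : s ≤ 2 * Real.sqrt (M^m) * Real.sqrt (F / wI) := by
    have h4 : s^2 ≤ 4 * M^m * (F / wI) := by
      rw [mul_div_assoc'] at *
      exact (le_div_iff₀ hwI0).mpr hkey
    have h5 : (2 * Real.sqrt (M^m))^2 = 4 * M^m := by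
      rw [mul_pow, Real.sq_sqrt hMm.le]; norm_num
    calc s = Real.sqrt (s^2) := (Real.sqrt_sq hs0).symm
      _ ≤ Real.sqrt (4 * M^m * (F/wI)) := Real.sqrt_le_sqrt h4
      _ = 2 * Real.sqrt (M^m) * Real.sqrt (F/wI) := by
          rw [← h5, Real.sqrt_mul (sq_nonneg _), Real.sqrt_sq (by positivity)]
  -- conclusion in ℝ≥0∞
  have hessSup : essSup (fun x => ENNReal.ofReal |MvPolynomial.eval x p|) (ω.restrict I)
      ≤ ENNReal.ofReal s := by
    refine essSup_le_of_ae_le _ ?_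
    refine (ae_restrict_mem hmeasI).mono fun x hx => ?_
    exact ENNReal.ofReal_le_ofReal (hmax x hx)
  refine hessSup.trans ?_
  have hf2int : Integrable (fun x => f x ^ 2) (ω.restrict I) := hf2.integrable_sq
  have hAF : (∫⁻ x in I, ENNReal.ofReal (f x ^ 2) ∂ω) = ENNReal.ofReal F :=
    (ofReal_integral_eq_lintegral_ofReal hf2int
      (Filter.Eventually.of_forall fun x => sq_nonneg _)).symm
  have hWre : ω I = ENNReal.ofReal wI := (ENNReal.ofReal_toReal hIfin.ne).symm
  have hRHS : ((∫⁻ x in I, ENNReal.ofReal (f x ^ 2) ∂ω) / ω I) ^ ((1:ℝ)/2)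
      = ENNReal.ofReal (Real.sqrt (F / wI)) := by
    rw [hAF, hWre, ← ENNReal.ofReal_div_of_pos hwI0,
      ENNReal.ofReal_rpow_of_nonneg (by positivity) (by norm_num), ← Real.sqrt_eq_rpow]
  calc ENNReal.ofReal s
      ≤ ENNReal.ofReal (2 * Real.sqrt (M^m) * Real.sqrt (F/wI)) :=
        ENNReal.ofReal_le_ofReal hsC
    _ = ENNReal.ofReal (2 * Real.sqrt (M^m)) * ENNReal.ofReal (Real.sqrt (F/wI)) :=
        ENNReal.ofReal_mul (by positivity)
    _ = ENNReal.ofReal (2 * Real.sqrt (M^m)) *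
        ((∫⁻ x in I, ENNReal.ofReal (f x ^ 2) ∂ω) / ω I) ^ ((1:ℝ)/2) := by rw [hRHS]
end
end

section
/- Let μ be a doubling measure on ℝⁿ and κ ∈ ℕ. Then for the weighted Alpert projection △^μ_{Q;κ} onto the space L²_{Q;κ}(μ), one has for all f ∈ L²(μ): ‖△^μ_{Q;κ} f‖_{L²(μ)} ≤ ‖△^μ_{Q;κ} f‖_{L^∞(μ)} √(|Q|_μ) ≤ C ‖△^μ_{Q;κ} f‖_{L²(μ)}, with C depending only on n, κ and the doubling constant of μ. -/
open MeasureTheory ENNReal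

noncomputable section

/-- The center of the dyadic child of the cube with center `c`, side `l`,
determined by the sign pattern `s`. -/
def childCenter (n : ℕ) (c : Fin n → ℝ) (l : ℝ) (s : Fin n → Bool) : Fin n → ℝ :=
  fun i => c i + (if s i then l / 4 else -(l / 4))

/-- Membership in the space `L²_{Q;κ}(μ)`: a linear combination of indicators of the
`2ⁿ` children of `Q` times polynomials of degree `< κ`, whose `μ`-moments on `Q`
vanish up to order `κ - 1`. -/
def MemAlpertSpace (n κ : ℕ) (μ : Measure (Fin n → ℝ)) (c : Fin n → ℝ) (l : ℝ)
    (h : (Fin n → ℝ) → ℝ) : Prop :=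
  (∃ p : (Fin n → Bool) → MvPolynomial (Fin n) ℝ,
      (∀ s, (p s).totalDegree < κ) ∧
      ∀ x, h x = ∑ s : Fin n → Bool,
        (Cube n (childCenter n c l s) (l / 2)).indicator
          (fun y => MvPolynomial.eval y (p s)) x) ∧
  ∀ β : Fin n → ℕ, (∑ i, β i) < κ →
    ∫ x in Cube n c l, h x * ∏ i, x i ^ β i ∂μ = 0

namespace AlpertAux

variable {n : ℕ}

lemma cube_eq_closedBall (c : Fin n → ℝ) {l : ℝ} (hl : 0 ≤ l) :
    Cube n c l = Metric.closedBall c (l / 2) := by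
  ext x
  simp only [Cube, Set.mem_setOf_eq, Metric.mem_closedBall]
  rw [dist_pi_le_iff (by linarith : (0:ℝ) ≤ l / 2)]
  simp [Real.dist_eq]

lemma cube_isCompact (c : Fin n → ℝ) {l : ℝ} (hl : 0 ≤ l) : IsCompact (Cube n c l) := by
  rw [cube_eq_closedBall c hl]
  exact isCompact_closedBall _ _

lemma measurableSet_cube (c : Fin n → ℝ) (l : ℝ) : MeasurableSet (Cube n c l) := by
  rcases le_or_gt 0 l with hl | hl
  · rw [cube_eq_closedBall c hl]; exact measurableSet_closedBall
  · have : Cube n c l = ∅ ∨ Cube n c l = Set.univ := by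
      rcases Nat.eq_zero_or_pos n with hn | hn
      · right; ext x; simp [Cube, hn]; intro i; exact absurd i.2 (by omega)
      · left; ext x; simp only [Cube, Set.mem_setOf_eq, Set.mem_empty_iff_false, iff_false]
        push_neg
        exact ⟨⟨0, hn⟩, by nlinarith [abs_nonneg (x ⟨0, hn⟩ - c ⟨0, hn⟩)]⟩
    rcases this with h | h <;> simp [h]

lemma center_mem_cube (c : Fin n → ℝ) {l : ℝ} (hl : 0 ≤ l) : c ∈ Cube n c l := by
  intro i; simp; linarith

def ctr (n : ℕ) (k : ℕ) (v : Fin n → Fin (2 ^ k)) : Fin n → ℝ :=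
  fun i => ((v i : ℝ) + 1 / 2) * ((2 : ℝ) ^ k)⁻¹ - 1 / 2

lemma abs_ctr_le (k : ℕ) (v : Fin n → Fin (2 ^ k)) (i : Fin n) :
    |ctr n k v i| ≤ 1 / 2 - ((2 : ℝ) ^ k)⁻¹ / 2 := by
  have hv : (v i : ℝ) ≤ (2 : ℝ) ^ k - 1 := by
    have : (v i : ℕ) < 2 ^ k := (v i).2
    have h2 : ((v i : ℕ) : ℝ) + 1 ≤ ((2 ^ k : ℕ) : ℝ) := by exact_mod_cast Nat.lt_iff_add_one_le.mp this
    push_cast at h2; linarith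
  have hv0 : (0 : ℝ) ≤ (v i : ℝ) := Nat.cast_nonneg _
  have hp : (0 : ℝ) < (2 : ℝ) ^ k := by positivity
  rw [abs_le, ctr]
  constructor
  · have h : (1/2) * ((2:ℝ)^k)⁻¹ ≤ ((v i : ℝ) + 1/2) * ((2:ℝ)^k)⁻¹ :=
      mul_le_mul_of_nonneg_right (by linarith) (by positivity)
    have h1 : ((2:ℝ)^k)⁻¹ ≤ 1 := by
      rw [inv_le_one_iff₀]; right; exact one_le_pow₀ (by norm_num)
    nlinarith
  · have h : ((v i : ℝ) + 1/2) * ((2:ℝ)^k)⁻¹ ≤ ((2:ℝ)^k - 1/2) * ((2:ℝ)^k)⁻¹ :=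
      mul_le_mul_of_nonneg_right (by linarith) (by positivity)
    rw [sub_mul, mul_inv_cancel₀ hp.ne'] at h
    nlinarith

lemma dyadic_subset_unit (k : ℕ) (v : Fin n → Fin (2 ^ k)) :
    Cube n (ctr n k v) ((2 : ℝ) ^ k)⁻¹ ⊆ Cube n 0 1 := by
  intro x hx i
  have h1 := hx i
  have h2 := abs_ctr_le k v i
  have hxi : |x i| ≤ |x i - ctr n k v i| + |ctr n k v i| := by
    calc |x i| = |(x i - ctr n k v i) + ctr n k v i| := by ring_nf
    _ ≤ _ := abs_add_le _ _
  have hp : (0:ℝ) < ((2:ℝ)^k)⁻¹ := by positivity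
  simp only [Pi.zero_apply, sub_zero]
  linarith

lemma dyadic_shrunk_strict (k : ℕ) (v : Fin n → Fin (2 ^ k)) {x : Fin n → ℝ}
    (hx : x ∈ Cube n (ctr n k v) (((2 : ℝ) ^ k)⁻¹ / 2)) (i : Fin n) : |x i| < 1 / 2 := by
  have h1 := hx i
  have h2 := abs_ctr_le k v i
  have hxi : |x i| ≤ |x i - ctr n k v i| + |ctr n k v i| := by
    calc |x i| = |(x i - ctr n k v i) + ctr n k v i| := by ring_nf
    _ ≤ _ := abs_add_le _ _
  have hp : (0:ℝ) < ((2:ℝ)^k)⁻¹ := by positivity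
  linarith

lemma dyadic_cover (k : ℕ) {x : Fin n → ℝ} (hx : x ∈ Cube n 0 1) :
    ∃ v : Fin n → Fin (2 ^ k), x ∈ Cube n (ctr n k v) ((2 : ℝ) ^ k)⁻¹ := by
  have hp : (0:ℝ) < (2:ℝ)^k := by positivity
  have key : ∀ i : Fin n, ∃ m : Fin (2 ^ k),
      |x i - (((m : ℝ) + 1 / 2) * ((2 : ℝ) ^ k)⁻¹ - 1 / 2)| ≤ ((2:ℝ)^k)⁻¹ / 2 := by
    intro i
    have hxi := hx i
    simp only [Pi.zero_apply, sub_zero] at hxi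
    rw [abs_le] at hxi
    set t : ℝ := (x i + 1/2) * (2:ℝ)^k with ht
    have ht0 : 0 ≤ t := mul_nonneg (by linarith [hxi.1]) hp.le
    have ht1 : t ≤ (2:ℝ)^k := by
      calc t ≤ 1 * (2:ℝ)^k := mul_le_mul_of_nonneg_right (by linarith [hxi.2]) hp.le
      _ = _ := one_mul _
    have hpk : 0 < 2 ^ k := Nat.pow_pos (by norm_num)
    set m : ℕ := min (Nat.floor t) (2 ^ k - 1) with hm
    have hmlt : m < 2 ^ k := by omega
    have hcast : ((2 ^ k : ℕ) : ℝ) = (2:ℝ)^k := by push_cast; ring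
    have hbounds : (m : ℝ) ≤ t ∧ t ≤ (m : ℝ) + 1 := by
      rcases le_or_gt (Nat.floor t) (2 ^ k - 1) with hc | hc
      · have hme : m = Nat.floor t := by omega
        rw [hme]
        exact ⟨Nat.floor_le ht0, (Nat.lt_floor_add_one t).le⟩
      · have hme : m = 2 ^ k - 1 := by omega
        have hfl : ((Nat.floor t : ℕ) : ℝ) ≤ t := Nat.floor_le ht0
        have h2k : ((2 ^ k : ℕ) : ℝ) ≤ (Nat.floor t : ℝ) := by
          exact_mod_cast Nat.le_of_lt_succ (by omega)
        rw [hcast] at h2k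
        have hteq : t = (2:ℝ)^k := le_antisymm ht1 (by linarith)
        constructor
        · rw [hme, hteq]
          have h1 : (1:ℕ) ≤ 2 ^ k := hpk
          have : ((2 ^ k - 1 : ℕ) : ℝ) = (2:ℝ)^k - 1 := by
            push_cast [Nat.cast_sub h1]; ring
          rw [this]; linarith
        · rw [hme, hteq]
          have h1 : (1:ℕ) ≤ 2 ^ k := hpk
          have : ((2 ^ k - 1 : ℕ) : ℝ) = (2:ℝ)^k - 1 := by
            push_cast [Nat.cast_sub h1]; ring
          rw [this]; linarith
    refine ⟨⟨m, hmlt⟩, ?_⟩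
    have hxe : x i = t * ((2:ℝ)^k)⁻¹ - 1/2 := by
      field_simp [ht]; ring
    rw [hxe]
    have : t * ((2:ℝ)^k)⁻¹ - 1/2 - ((((⟨m, hmlt⟩ : Fin (2^k)) : ℝ) + 1/2) * ((2:ℝ)^k)⁻¹ - 1/2)
        = (t - (m:ℝ) - 1/2) * ((2:ℝ)^k)⁻¹ := by
      push_cast; ring
    rw [this, abs_mul, abs_of_pos (by positivity : (0:ℝ) < ((2:ℝ)^k)⁻¹)]
    have habs : |t - (m:ℝ) - 1/2| ≤ 1/2 := by
      rw [abs_le]; constructor <;> [linarith [hbounds.1]; linarith [hbounds.2]]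
    calc |t - (m:ℝ) - 1/2| * ((2:ℝ)^k)⁻¹ ≤ (1/2) * ((2:ℝ)^k)⁻¹ :=
      mul_le_mul_of_nonneg_right habs (by positivity)
    _ = ((2:ℝ)^k)⁻¹ / 2 := by ring
  choose v hv using key
  exact ⟨v, fun i => hv i⟩

/-- evaluation of a coefficient vector as a polynomial function -/
def ev (n κ : ℕ) (a : (Fin n → Fin κ) → ℝ) (x : Fin n → ℝ) : ℝ :=
  ∑ v : Fin n → Fin κ, a v * ∏ i, x i ^ (v i : ℕ)

lemma continuous_ev (n κ : ℕ) (a : (Fin n → Fin κ) → ℝ) : Continuous (ev n κ a) := by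
  apply continuous_finset_sum
  intro v _
  exact continuous_const.mul (continuous_finset_prod _ fun i _ => (continuous_apply i).pow _)

/-- the coefficient-to-function linear map into `C(unit cube, ℝ)` -/
def evL (n κ : ℕ) : ((Fin n → Fin κ) → ℝ) →ₗ[ℝ] C(↥(Cube n 0 1), ℝ) where
  toFun a := ⟨fun x => ev n κ a x.1, (continuous_ev n κ a).comp continuous_subtype_val⟩
  map_add' a b := by
    ext x; simp [ev, add_mul, Finset.sum_add_distrib]
  map_smul' r a := by
    ext x; simp [ev, Finset.mul_sum, mul_assoc]

lemma core (n κ : ℕ) : ∃ (K : ℕ) (c : ℝ), 0 < c ∧ ∀ a : (Fin n → Fin κ) → ℝ,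
    ∃ k, k ≤ K ∧ ∃ v : Fin n → Fin (2 ^ k),
      ∀ x ∈ Cube n (ctr n k v) ((2 : ℝ) ^ k)⁻¹, ∀ y ∈ Cube n 0 1,
        (c : ℝ) * |ev n κ a y| ≤ |ev n κ a x| := by
  haveI : CompactSpace (Cube n 0 1) :=
    isCompact_iff_compactSpace.mp (cube_isCompact (0 : Fin n → ℝ) (by norm_num))
  set E := C(↥(Cube n 0 1), ℝ)
  set L := evL n κ with hL
  set W := LinearMap.range L with hW
  haveI : FiniteDimensional ℝ W := inferInstance
  set ι := (k : ℕ) × (Fin n → Fin (2 ^ k)) with hι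
  set U : ι → Set ↥W := fun i =>
    {g | ∀ x : ↥(Cube n 0 1), (x : Fin n → ℝ) ∈ Cube n (ctr n i.1 i.2) ((2 : ℝ) ^ i.1)⁻¹ →
      1 / 4 < |(g : E) x|} with hU
  have hopen : ∀ i, IsOpen (U i) := by
    rintro ⟨k, v⟩
    rw [Metric.isOpen_iff]
    intro g hg
    set S' : Set ↥(Cube n 0 1) :=
      {x | (x : Fin n → ℝ) ∈ Cube n (ctr n k v) ((2 : ℝ) ^ k)⁻¹} with hS'
    have hS'c : IsCompact S' := by
      apply IsClosed.isCompact
      have : IsClosed (Cube n (ctr n k v) ((2 : ℝ) ^ k)⁻¹) := by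
        rw [cube_eq_closedBall _ (by positivity)]; exact Metric.isClosed_closedBall
      exact this.preimage continuous_subtype_val
    rcases S'.eq_empty_or_nonempty with hem | hne
    · exact ⟨1, by norm_num, fun g' _ x hx => absurd (show x ∈ S' from hx) (by simp [hem])⟩
    · obtain ⟨x₀, hx₀S, hx₀min'⟩ := hS'c.exists_isMinOn hne
        (Continuous.continuousOn ((g : E).continuous.abs))
      have hx₀min : ∀ x ∈ S', |(g : E) x₀| ≤ |(g : E) x| := fun x hx => hx₀min' hx
      have hδ : 0 < |(g : E) x₀| - 1 / 4 := by
        have := hg x₀ hx₀S; linarith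
      refine ⟨|(g : E) x₀| - 1 / 4, hδ, fun g' hg' x hx => ?_⟩
      have h1 : |(g' : E) x - (g : E) x| ≤ ‖g' - g‖ := by
        have := ContinuousMap.norm_coe_le_norm ((g' : E) - (g : E)) x
        simpa [Real.norm_eq_abs] using this
      have h2 : ‖g' - g‖ < |(g : E) x₀| - 1 / 4 := by
        rw [Metric.mem_ball, dist_eq_norm] at hg'; exact hg'
      have h3 : |(g : E) x₀| ≤ |(g : E) x| := hx₀min x hx
      have := abs_sub_abs_le_abs_sub ((g' : E) x) ((g : E) x)
      have h4 : |(g' : E) x - (g : E) x| ≤ ‖g' - g‖ := h1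
      show 1 / 4 < |(g' : E) x|
      have h5 : |(g : E) x| - |(g' : E) x| ≤ |(g' : E) x - (g : E) x| := by
        have := abs_sub_abs_le_abs_sub ((g : E) x) ((g' : E) x)
        rw [abs_sub_comm] at this; linarith [this]
      linarith
  have hcover : Metric.sphere (0 : ↥W) 1 ⊆ ⋃ i, U i := by
    intro g hg
    have hng : ‖g‖ = 1 := mem_sphere_zero_iff_norm.mp hg
    have hex : ∃ x₀ : ↥(Cube n 0 1), 2 / 3 < |(g : E) x₀| := by
      by_contra hcon
      push_neg at hcon
      have : ‖(g : E)‖ ≤ 2 / 3 := by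
        rw [ContinuousMap.norm_le _ (by norm_num)]
        intro x; rw [Real.norm_eq_abs]; exact hcon x
      have : ‖g‖ ≤ 2 / 3 := this
      linarith
    obtain ⟨x₀, hx₀⟩ := hex
    have hopen2 : IsOpen {x : ↥(Cube n 0 1) | 1 / 4 < |(g : E) x|} :=
      isOpen_lt continuous_const (g : E).continuous.abs
    have hx₀mem : x₀ ∈ {x : ↥(Cube n 0 1) | 1 / 4 < |(g : E) x|} := by
      simp only [Set.mem_setOf_eq]; linarith
    obtain ⟨δ, hδ, hball⟩ := Metric.isOpen_iff.mp hopen2 x₀ hx₀mem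
    obtain ⟨k, hk⟩ := exists_pow_lt_of_lt_one hδ (by norm_num : (1 : ℝ) / 2 < 1)
    have hk' : ((2 : ℝ) ^ k)⁻¹ < δ := by
      have : ((1 : ℝ) / 2) ^ k = ((2 : ℝ) ^ k)⁻¹ := by
        rw [div_pow, one_pow, one_div]
      linarith [hk, this ▸ hk]
    obtain ⟨v, hv⟩ := dyadic_cover k x₀.2
    refine Set.mem_iUnion.mpr ⟨⟨k, v⟩, fun x hx => ?_⟩
    have hdist : dist x x₀ < δ := by
      rw [Subtype.dist_eq]
      have : dist (x : Fin n → ℝ) (x₀ : Fin n → ℝ) ≤ ((2 : ℝ) ^ k)⁻¹ := by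
        rw [dist_pi_le_iff (by positivity)]
        intro i
        rw [Real.dist_eq]
        have h1 := hx i
        have h2 := hv i
        calc |(x : Fin n → ℝ) i - (x₀ : Fin n → ℝ) i|
            ≤ |(x : Fin n → ℝ) i - ctr n k v i| + |ctr n k v i - (x₀ : Fin n → ℝ) i| := by
              have : (x : Fin n → ℝ) i - (x₀ : Fin n → ℝ) i =
                ((x : Fin n → ℝ) i - ctr n k v i) + (ctr n k v i - (x₀ : Fin n → ℝ) i) := by ring
              rw [this]; exact abs_add_le _ _
        _ ≤ ((2 : ℝ) ^ k)⁻¹ / 2 + ((2 : ℝ) ^ k)⁻¹ / 2 := by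
              rw [abs_sub_comm (ctr n k v i)]; exact add_le_add h1 h2
        _ = ((2 : ℝ) ^ k)⁻¹ := by ring
      linarith
    exact hball hdist
  obtain ⟨t, ht⟩ := (isCompact_sphere (0 : ↥W) 1).elim_finite_subcover U hopen hcover
  refine ⟨t.sup Sigma.fst, 1 / 4, by norm_num, fun a => ?_⟩
  by_cases ha : L a = 0
  · refine ⟨0, Nat.zero_le _, fun _ => ⟨0, by norm_num⟩, fun x hx y hy => ?_⟩
    have : ev n κ a y = 0 := by
      have := DFunLike.congr_fun ha (⟨y, hy⟩ : ↥(Cube n 0 1))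
      exact this
    rw [this]
    simpa using abs_nonneg (ev n κ a x)
  · set gg : ↥W := ⟨L a, LinearMap.mem_range_self L a⟩ with hgg
    have hggne : gg ≠ 0 := by
      simp only [hgg, ne_eq, Submodule.mk_eq_zero]; exact ha
    have hgnorm : (0 : ℝ) < ‖gg‖ := norm_pos_iff.mpr hggne
    set u : ↥W := ‖gg‖⁻¹ • gg with hu
    have husph : u ∈ Metric.sphere (0 : ↥W) 1 := by
      rw [mem_sphere_zero_iff_norm]
      show ‖(u : E)‖ = 1
      rw [hu, Submodule.coe_smul, norm_smul, Real.norm_eq_abs, abs_of_pos (inv_pos.mpr hgnorm)]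
      exact inv_mul_cancel₀ hgnorm.ne'
    obtain ⟨i, hit, hiu⟩ := Set.mem_iUnion₂.mp (ht husph)
    obtain ⟨k, v⟩ := i
    refine ⟨k, Finset.le_sup (f := Sigma.fst) hit, v, fun x hx y hy => ?_⟩
    have hxK : x ∈ Cube n 0 1 := dyadic_subset_unit k v hx
    have hkey : 1 / 4 < |(u : E) ⟨x, hxK⟩| := hiu ⟨x, hxK⟩ hx
    have hux : (u : E) ⟨x, hxK⟩ = ‖gg‖⁻¹ * ev n κ a x := by
      have h1 : (u : E) = ‖gg‖⁻¹ • ((gg : E)) := by rw [hu]; rfl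
      rw [h1, ContinuousMap.smul_apply]
      rfl
    rw [hux, abs_mul, abs_of_pos (by positivity : (0:ℝ) < ‖gg‖⁻¹)] at hkey
    have hy2 : |ev n κ a y| ≤ ‖gg‖ := by
      have h1 : |(L a) (⟨y, hy⟩ : ↥(Cube n 0 1))| ≤ ‖L a‖ := by
        have := ContinuousMap.norm_coe_le_norm (L a) (⟨y, hy⟩ : ↥(Cube n 0 1))
        simpa [Real.norm_eq_abs] using this
      have h2 : (L a) (⟨y, hy⟩ : ↥(Cube n 0 1)) = ev n κ a y := rfl
      have h3 : ‖gg‖ = ‖L a‖ := rfl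
      rw [h2] at h1; rw [h3]; exact h1
    have : 1 / 4 * ‖gg‖ < |ev n κ a x| := by
      have := mul_lt_mul_of_pos_left hkey hgnorm
      calc 1 / 4 * ‖gg‖ = ‖gg‖ * (1/4) := by ring
      _ < ‖gg‖ * (‖gg‖⁻¹ * |ev n κ a x|) := this
      _ = |ev n κ a x| := by rw [← mul_assoc, mul_inv_cancel₀ hgnorm.ne', one_mul]
    calc 1 / 4 * |ev n κ a y| ≤ 1 / 4 * ‖gg‖ := by linarith [hy2]
    _ ≤ |ev n κ a x| := this.le

open MvPolynomial

lemma exists_coeffs {κ : ℕ} (q : MvPolynomial (Fin n) ℝ) (hq : q.totalDegree < κ) :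
    ∃ a : (Fin n → Fin κ) → ℝ, ∀ x, eval x q = ev n κ a x := by
  have hκ : 0 < κ := lt_of_le_of_lt (Nat.zero_le _) hq
  set toF : (Fin n → Fin κ) → (Fin n →₀ ℕ) :=
    fun v => Finsupp.equivFunOnFinite.symm (fun i => (v i : ℕ)) with htoF
  have htoFapp : ∀ v i, (toF v) i = (v i : ℕ) := fun v i => rfl
  have hinj : ∀ v ∈ Finset.univ, ∀ w ∈ Finset.univ, toF v = toF w → v = w := by
    intro v _ w _ h
    funext i
    have := DFunLike.congr_fun h i
    rw [htoFapp, htoFapp] at this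
    exact Fin.ext this
  have hsub : q.support ⊆ Finset.image toF Finset.univ := by
    intro d hd
    have hlt : ∀ i, d i < κ := by
      intro i
      rcases Nat.eq_zero_or_pos (d i) with h0 | h0
      · omega
      · have hi : i ∈ d.support := Finsupp.mem_support_iff.mpr (by omega)
        have h1 : d i ≤ d.sum fun _ e => e := by
          rw [Finsupp.sum]
          exact Finset.single_le_sum (fun _ _ => Nat.zero_le _) hi
        have h2 := MvPolynomial.le_totalDegree hd
        omega
    refine Finset.mem_image.mpr ⟨fun i => ⟨d i, hlt i⟩, Finset.mem_univ _, ?_⟩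
    ext i
    rw [htoFapp]
  refine ⟨fun v => q.coeff (toF v), fun x => ?_⟩
  calc eval x q = ∑ d ∈ q.support, q.coeff d * ∏ i, x i ^ d i := eval_eq' (σ := Fin n) x q
    _ = ∑ d ∈ Finset.image toF Finset.univ, q.coeff d * ∏ i, x i ^ d i := by
        exact Finset.sum_subset (f := fun d : Fin n →₀ ℕ => q.coeff d * ∏ i, x i ^ d i) hsub
          (fun d _ hd => by beta_reduce; rw [MvPolynomial.notMem_support_iff.mp hd, zero_mul])
    _ = ∑ v : Fin n → Fin κ, q.coeff (toF v) * ∏ i, x i ^ ((toF v) i) :=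
        Finset.sum_image hinj
    _ = ev n κ (fun v => q.coeff (toF v)) x := by
        refine Finset.sum_congr rfl fun v _ => ?_
        congr 1

lemma totalDegree_bind₁_le (f : Fin n → MvPolynomial (Fin n) ℝ)
    (hf : ∀ i, (f i).totalDegree ≤ 1) (p : MvPolynomial (Fin n) ℝ) :
    (bind₁ f p).totalDegree ≤ p.totalDegree := by
  conv_lhs => rw [p.as_sum, map_sum]
  refine (MvPolynomial.totalDegree_finset_sum _ _).trans ?_
  refine Finset.sup_le fun d hd => ?_
  rw [bind₁_monomial]
  refine (MvPolynomial.totalDegree_mul _ _).trans ?_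
  have h1 : (MvPolynomial.C (σ := Fin n) (R := ℝ) (p.coeff d)).totalDegree = 0 :=
    totalDegree_C (σ := Fin n) _
  rw [h1, zero_add]
  refine (MvPolynomial.totalDegree_finset_prod _ _).trans ?_
  have h2 : ∀ i ∈ d.support, ((f i) ^ (d i)).totalDegree ≤ d i := by
    intro i _
    refine (MvPolynomial.totalDegree_pow _ _).trans ?_
    calc d i * (f i).totalDegree ≤ d i * 1 := Nat.mul_le_mul_left _ (hf i)
    _ = d i := Nat.mul_one _
  calc ∑ i ∈ d.support, ((f i) ^ (d i)).totalDegree ≤ ∑ i ∈ d.support, d i :=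
        Finset.sum_le_sum h2
  _ = d.sum fun _ e => e := rfl
  _ ≤ p.totalDegree := MvPolynomial.le_totalDegree hd

lemma eval_bind₁' (f : Fin n → MvPolynomial (Fin n) ℝ) (p : MvPolynomial (Fin n) ℝ)
    (x : Fin n → ℝ) : eval x (bind₁ f p) = eval (fun i => eval x (f i)) p := by
  simpa using eval₂Hom_bind₁ (RingHom.id ℝ) x f p

lemma subcube_lemma (n κ : ℕ) : ∃ (K : ℕ) (c₀ : ℝ), 0 < c₀ ∧
    ∀ (p : MvPolynomial (Fin n) ℝ), p.totalDegree < κ →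
    ∀ (a : Fin n → ℝ) (m : ℝ), 0 < m →
    ∃ (z : Fin n → ℝ) (ρ : ℝ), ((2:ℝ) ^ (K + 1))⁻¹ ≤ ρ ∧ 0 < ρ ∧
      (∀ i, |z i - a i| ≤ m / 2) ∧
      ∀ x ∈ Cube n z (ρ * m), (∀ i, |x i - a i| < m / 2) ∧
        (∀ y ∈ Cube n a m, c₀ * |eval y p| ≤ |eval x p|) := by
  obtain ⟨K, c, hc, hcore⟩ := core n κ
  refine ⟨K, c, hc, fun p hp a m hm => ?_⟩
  set f : Fin n → MvPolynomial (Fin n) ℝ := fun i => C (a i) + C m * X i with hfdef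
  have hf : ∀ i, (f i).totalDegree ≤ 1 := by
    intro i
    refine (totalDegree_add _ _).trans (max_le ?_ ?_)
    · rw [totalDegree_C]; omega
    · refine (totalDegree_mul _ _).trans ?_
      rw [totalDegree_C, totalDegree_X]
  set q := bind₁ f p with hqdef
  have hqdeg : q.totalDegree < κ := lt_of_le_of_lt (totalDegree_bind₁_le f hf p) hp
  obtain ⟨av, hav⟩ := exists_coeffs q hqdeg
  obtain ⟨k, hkK, v, hv⟩ := hcore av
  have hevq : ∀ u : Fin n → ℝ, eval u q = eval (fun i => a i + m * u i) p := by
    intro u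
    rw [hqdef, eval_bind₁']
    have : (fun i => eval u (f i)) = fun i => a i + m * u i := by
      funext i; simp [hfdef]
    rw [this]
  set z : Fin n → ℝ := fun i => a i + m * ctr n k v i with hzdef
  set ρ : ℝ := ((2:ℝ) ^ k)⁻¹ / 2 with hρdef
  have hρpos : 0 < ρ := by positivity
  have hρge : ((2:ℝ) ^ (K + 1))⁻¹ ≤ ρ := by
    rw [hρdef]
    have h1 : (2:ℝ) ^ k ≤ (2:ℝ) ^ K := pow_le_pow_right₀ (by norm_num) hkK
    have h2 : ((2:ℝ) ^ K)⁻¹ ≤ ((2:ℝ) ^ k)⁻¹ := by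
      apply inv_anti₀ (by positivity) h1
    have h3 : ((2:ℝ) ^ (K + 1))⁻¹ = ((2:ℝ) ^ K)⁻¹ / 2 := by
      rw [pow_succ]; field_simp
    rw [h3]; linarith
  refine ⟨z, ρ, hρge, hρpos, ?_, ?_⟩
  · intro i
    have := abs_ctr_le k v i
    have h1 : |z i - a i| = m * |ctr n k v i| := by
      rw [hzdef]
      simp only [add_sub_cancel_left]
      rw [abs_mul, abs_of_pos hm]
    rw [h1]
    have hinv : 0 < ((2:ℝ)^k)⁻¹ := by positivity
    nlinarith
  · intro x hx
    set u : Fin n → ℝ := fun i => (x i - a i) / m with hudef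
    have hxz : ∀ i, |x i - z i| ≤ ρ * m / 2 := hx
    have hu1 : u ∈ Cube n (ctr n k v) (((2:ℝ) ^ k)⁻¹ / 2) := by
      intro i
      have h1 : u i - ctr n k v i = (x i - z i) / m := by
        rw [hudef, hzdef]; field_simp; ring
      rw [h1, abs_div, abs_of_pos hm, div_le_iff₀ hm]
      have h2 := hxz i
      have hρm : ρ * m / 2 = ((2:ℝ)^k)⁻¹ / 2 * m / 2 := by rw [hρdef]
      nlinarith [h2, hρm]
    have hu2 : u ∈ Cube n (ctr n k v) ((2:ℝ) ^ k)⁻¹ := by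
      intro i
      have h3 := hu1 i
      have hinv : 0 < ((2:ℝ)^k)⁻¹ := by positivity
      have : ((2:ℝ)^k)⁻¹ / 2 / 2 ≤ ((2:ℝ)^k)⁻¹ / 2 := by linarith
      exact le_trans h3 this
    have hxu : x = fun i => a i + m * u i := by
      funext i; rw [hudef]; field_simp; ring
    constructor
    · intro i
      have hstrict := dyadic_shrunk_strict k v hu1 i
      have : |x i - a i| = m * |u i| := by
        rw [hudef, abs_div, abs_of_pos hm]; field_simp
      rw [this]
      nlinarith
    · intro y hy
      set w : Fin n → ℝ := fun i => (y i - a i) / m with hwdef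
      have hw : w ∈ Cube n 0 1 := by
        intro i
        have := hy i
        rw [hwdef]
        simp only [Pi.zero_apply, sub_zero]
        rw [abs_div, abs_of_pos hm, div_le_iff₀ hm]
        linarith
      have hyw : y = fun i => a i + m * w i := by
        funext i; rw [hwdef]; field_simp; ring
      have h1 : eval y p = ev n κ av w := by
        rw [hyw, ← hevq w, hav]
      have h2 : eval x p = ev n κ av u := by
        rw [hxu, ← hevq u, hav]
      rw [h1, h2]
      exact hv u hu2 w hw

lemma ite_diff {l : ℝ} (hl : 0 < l) (b b' : Bool) (hbb : b ≠ b') :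
    |((if b then l / 4 else -(l / 4)) : ℝ) - (if b' then l / 4 else -(l / 4))| = l / 2 := by
  have e1 : ((-(l/4) : ℝ)) - l/4 = -(l/2) := by ring
  have e2 : ((l/4 : ℝ)) - -(l/4) = l/2 := by ring
  cases b <;> cases b' <;> simp only [if_true, if_false, Bool.false_eq_true, ite_true, ite_false] at hbb ⊢
  · exact absurd rfl hbb
  · rw [e1, abs_neg, abs_of_pos (by linarith)]
  · rw [e2, abs_of_pos (by linarith)]
  · exact absurd rfl hbb

lemma doubling_iter {n : ℕ} {μ : Measure (Fin n → ℝ)} {Cd : ℝ} (hd : IsDoubling μ Cd)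
    (j : ℕ) (z : Fin n → ℝ) {t : ℝ} (ht : 0 < t) :
    μ (Cube n z ((2:ℝ) ^ j * t)) ≤ (ENNReal.ofReal Cd) ^ j * μ (Cube n z t) := by
  induction j with
  | zero => simp
  | succ j ih =>
    have h1 : (2:ℝ) ^ (j + 1) * t = 2 * ((2:ℝ) ^ j * t) := by ring
    rw [h1]
    calc μ (Cube n z (2 * ((2:ℝ) ^ j * t)))
        ≤ ENNReal.ofReal Cd * μ (Cube n z ((2:ℝ) ^ j * t)) := hd z _ (by positivity)
      _ ≤ ENNReal.ofReal Cd * ((ENNReal.ofReal Cd) ^ j * μ (Cube n z t)) :=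
          mul_le_mul_right ih _
      _ = (ENNReal.ofReal Cd) ^ (j + 1) * μ (Cube n z t) := by rw [pow_succ]; ring

end AlpertAux

open AlpertAux MvPolynomial in
/-- For a doubling measure `μ`, the weighted Alpert projection `h = △^μ_{Q;κ} f`
satisfies `‖h‖_{L²(μ)} ≤ ‖h‖_{L^∞(μ)} √(|Q|_μ) ≤ C ‖h‖_{L²(μ)}`. -/
theorem alpert_projection_sup_bound (n κ : ℕ) (Cd : ℝ) :
    ∃ C : ℝ, 0 < C ∧
      ∀ (μ : Measure (Fin n → ℝ)), IsLocallyFiniteMeasure μ → IsDoubling μ Cd →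
      ∀ (c : Fin n → ℝ) (l : ℝ), 0 < l →
      ∀ (f h : (Fin n → ℝ) → ℝ),
        MemLp f 2 μ →
        MemAlpertSpace n κ μ c l h →
        -- `h` is the orthogonal projection of `f` onto `L²_{Q;κ}(μ)`
        (∀ h' : (Fin n → ℝ) → ℝ, MemAlpertSpace n κ μ c l h' →
          ∫ x, (f x - h x) * h' x ∂μ = 0) →
        Real.sqrt (∫ x, (h x) ^ 2 ∂μ) ≤
            essSup (fun x => |h x|) μ * Real.sqrt (μ (Cube n c l)).toReal ∧
          essSup (fun x => |h x|) μ * Real.sqrt (μ (Cube n c l)).toReal ≤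
            C * Real.sqrt (∫ x, (h x) ^ 2 ∂μ) := by
  obtain ⟨K, c₀, hc₀, hsub⟩ := subcube_lemma n κ
  set Cd' : ℝ := max Cd 0 with hCd'
  set D : ℝ := Cd' ^ (K + 3) with hD
  have hD0 : 0 ≤ D := by positivity
  refine ⟨(2:ℝ) ^ n * Real.sqrt D / c₀ + 1, by positivity, ?_⟩
  intro μ hloc hdub c l hl f h hf hmem horth
  obtain ⟨⟨p, hdeg, hrep⟩, -⟩ := hmem
  have hl2 : (0:ℝ) < l / 2 := by linarith
  -- geometry of children
  have hccdist : ∀ (s : Fin n → Bool) (i : Fin n), |childCenter n c l s i - c i| ≤ l / 4 := by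
    intro s i
    simp only [childCenter, add_sub_cancel_left]
    split_ifs
    · rw [abs_of_pos (by linarith)]
    · rw [abs_of_neg (by linarith)]; linarith
  have hchild_sub : ∀ s, Cube n (childCenter n c l s) (l / 2) ⊆ Cube n c l := by
    intro s x hx i
    have h1 := hx i
    have h2 := hccdist s i
    calc |x i - c i| ≤ |x i - childCenter n c l s i| + |childCenter n c l s i - c i| := by
          have : x i - c i = (x i - childCenter n c l s i) + (childCenter n c l s i - c i) := by
            ring
          rw [this]; exact abs_add_le _ _
    _ ≤ l / 2 / 2 + l / 4 := add_le_add h1 h2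
    _ = l / 2 := by ring
  -- max points on children
  have hxs : ∀ s : Fin n → Bool, ∃ x, x ∈ Cube n (childCenter n c l s) (l / 2) ∧
      ∀ y ∈ Cube n (childCenter n c l s) (l / 2), |eval y (p s)| ≤ |eval x (p s)| := by
    intro s
    obtain ⟨x, hx, hmax⟩ := (cube_isCompact (childCenter n c l s) hl2.le).exists_isMaxOn
      ⟨_, center_mem_cube _ hl2.le⟩
      ((MvPolynomial.continuous_eval (p s)).abs.continuousOn)
    exact ⟨x, hx, fun y hy => hmax hy⟩
  choose xs hxsmem hxsmax using hxs
  obtain ⟨sm, -, hsmax⟩ := Finset.exists_max_image (Finset.univ : Finset (Fin n → Bool))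
    (fun s => |eval (xs s) (p s)|) ⟨fun _ => true, Finset.mem_univ _⟩
  set A : ℝ := |eval (xs sm) (p sm)| with hA
  have hA0 : 0 ≤ A := abs_nonneg _
  -- pointwise bound on h
  have hhb : ∀ x, |h x| ≤ (2:ℝ) ^ n * A := by
    intro x
    rw [hrep x]
    calc |∑ s : Fin n → Bool, (Cube n (childCenter n c l s) (l / 2)).indicator
            (fun y => eval y (p s)) x|
        ≤ ∑ s : Fin n → Bool, |(Cube n (childCenter n c l s) (l / 2)).indicator
            (fun y => eval y (p s)) x| := Finset.abs_sum_le_sum_abs _ _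
      _ ≤ ∑ _s : Fin n → Bool, A := by
          refine Finset.sum_le_sum fun s _ => ?_
          by_cases hx : x ∈ Cube n (childCenter n c l s) (l / 2)
          · rw [Set.indicator_of_mem hx]
            exact le_trans (hxsmax s x hx) (hsmax s (Finset.mem_univ _))
          · rw [Set.indicator_of_notMem hx, abs_zero]; exact hA0
      _ = (2:ℝ) ^ n * A := by
          rw [Finset.sum_const, Finset.card_univ]
          have : Fintype.card (Fin n → Bool) = 2 ^ n := by simp
          rw [this, nsmul_eq_mul]
          push_cast
          ring
  -- measurability and support
  have hmeas : Measurable h := by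
    have : h = fun x => ∑ s : Fin n → Bool, (Cube n (childCenter n c l s) (l / 2)).indicator
        (fun y => eval y (p s)) x := funext hrep
    rw [this]
    exact Finset.measurable_sum _ fun s _ =>
      (MvPolynomial.continuous_eval (p s)).measurable.indicator (measurableSet_cube _ _)
  have hsupp : ∀ x, x ∉ Cube n c l → h x = 0 := by
    intro x hx
    rw [hrep x]
    exact Finset.sum_eq_zero fun s _ =>
      Set.indicator_of_notMem (fun hxs => hx (hchild_sub s hxs)) _
  have heq : (fun x => h x ^ 2) = (Cube n c l).indicator (fun x => h x ^ 2) := by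
    funext x
    by_cases hx : x ∈ Cube n c l
    · rw [Set.indicator_of_mem hx]
    · rw [Set.indicator_of_notMem hx, hsupp x hx]; norm_num
  haveI : IsFiniteMeasure (μ.restrict (Cube n c l)) :=
    ⟨by rw [Measure.restrict_apply_univ]; exact (cube_isCompact c hl.le).measure_lt_top⟩
  have hintOn : IntegrableOn (fun x => h x ^ 2) (Cube n c l) μ := by
    refine Integrable.mono' (integrable_const (((2:ℝ) ^ n * A) ^ 2))
      ((hmeas.pow_const 2).aestronglyMeasurable) ?_
    refine Filter.Eventually.of_forall fun x => ?_
    rw [Real.norm_eq_abs, abs_pow]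
    exact pow_le_pow_left₀ (abs_nonneg _) (hhb x) 2
  have hint : Integrable (fun x => h x ^ 2) μ := by
    rw [heq]
    exact hintOn.integrable_indicator (measurableSet_cube c l)
  rcases eq_or_ne μ 0 with hμ0 | hμ0
  · subst hμ0
    constructor
    · simp [integral_zero_measure, Real.sqrt_zero]
    · simp [integral_zero_measure, Real.sqrt_zero]
  -- main case
  set M : ℝ := essSup (fun x => |h x|) μ with hM
  have hsetnn : ∀ b : ℝ, μ {x | b < |h x|} = 0 → 0 ≤ b := by
    intro b hb
    by_contra hb0
    push_neg at hb0
    have : {x | b < |h x|} = Set.univ :=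
      Set.eq_univ_of_forall fun x => lt_of_lt_of_le hb0 (abs_nonneg _)
    rw [this] at hb
    exact hμ0 (Measure.measure_univ_eq_zero.mp hb)
  have hmemset : μ {x | (2:ℝ) ^ n * A < |h x|} = 0 := by
    have : {x | (2:ℝ) ^ n * A < |h x|} = ∅ :=
      Set.eq_empty_iff_forall_notMem.mpr fun x hx => absurd hx (not_lt.mpr (hhb x))
    rw [this, measure_empty]
  have hMle : M ≤ (2:ℝ) ^ n * A := by
    rw [hM, essSup_eq_sInf]
    exact csInf_le ⟨0, fun b hb => hsetnn b hb⟩ hmemset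
  have hM0 : 0 ≤ M := by
    rw [hM, essSup_eq_sInf]
    exact le_csInf ⟨_, hmemset⟩ fun b hb => hsetnn b hb
  have hMae : ∀ᵐ x ∂μ, |h x| ≤ M :=
    ae_le_essSup (Filter.isBoundedUnder_of ⟨(2:ℝ) ^ n * A, fun x => hhb x⟩)
  have hQfin : μ (Cube n c l) ≠ ⊤ := ((cube_isCompact c hl.le).measure_lt_top).ne
  -- first inequality
  have hIQ : ∫ x, h x ^ 2 ∂μ = ∫ x in Cube n c l, h x ^ 2 ∂μ := by
    conv_lhs => rw [heq]
    rw [integral_indicator (measurableSet_cube c l)]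
  have hIbound : ∫ x in Cube n c l, h x ^ 2 ∂μ ≤ M ^ 2 * (μ (Cube n c l)).toReal := by
    have h1 : ∫ x in Cube n c l, h x ^ 2 ∂μ ≤ ∫ _x in Cube n c l, M ^ 2 ∂μ := by
      refine integral_mono_ae hintOn (integrable_const _) ?_
      refine ae_restrict_of_ae (hMae.mono fun x hx => ?_)
      calc h x ^ 2 = |h x| ^ 2 := (sq_abs _).symm
      _ ≤ M ^ 2 := pow_le_pow_left₀ (abs_nonneg _) hx 2
    rw [setIntegral_const, smul_eq_mul, mul_comm] at h1
    exact h1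
  have hfirst : Real.sqrt (∫ x, h x ^ 2 ∂μ) ≤ M * Real.sqrt (μ (Cube n c l)).toReal := by
    calc Real.sqrt (∫ x, h x ^ 2 ∂μ) ≤ Real.sqrt (M ^ 2 * (μ (Cube n c l)).toReal) := by
          apply Real.sqrt_le_sqrt
          rw [hIQ]
          exact hIbound
    _ = M * Real.sqrt (μ (Cube n c l)).toReal := by
          rw [Real.sqrt_mul (sq_nonneg M), Real.sqrt_sq hM0]
  refine ⟨hfirst, ?_⟩
  -- second inequality
  obtain ⟨z, ρ, hρge, hρpos, hzcc, hcube⟩ :=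
    hsub (p sm) (hdeg sm) (childCenter n c l sm) (l / 2) hl2
  set S2 : Set (Fin n → ℝ) := Cube n z (ρ * (l / 2)) with hS2
  have hS2h : ∀ x ∈ S2, h x = eval x (p sm) ∧ c₀ * A ≤ |eval x (p sm)| := by
    intro x hx
    obtain ⟨hstrict, hbound⟩ := hcube x hx
    refine ⟨?_, hbound (xs sm) (hxsmem sm)⟩
    rw [hrep x]
    rw [Finset.sum_eq_single sm]
    · refine Set.indicator_of_mem ?_ _
      show x ∈ Cube n (childCenter n c l sm) (l / 2)
      intro i
      exact (hstrict i).le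
    · intro s _ hs
      refine Set.indicator_of_notMem ?_ _
      intro hxs
      obtain ⟨i, hi⟩ := Function.ne_iff.mp hs
      have hd1 : |childCenter n c l s i - childCenter n c l sm i| = l / 2 := by
        simp only [childCenter]
        have e : c i + (if s i then l / 4 else -(l / 4)) -
            (c i + (if sm i then l / 4 else -(l / 4))) =
            (if s i then l / 4 else -(l / 4)) - (if sm i then l / 4 else -(l / 4)) := by ring
        rw [e]
        exact ite_diff hl (s i) (sm i) hi
      have h1 := hxs i
      have h2 := hstrict i
      have h3 : |childCenter n c l s i - childCenter n c l sm i| ≤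
          |childCenter n c l s i - x i| + |x i - childCenter n c l sm i| := by
        have e2 : childCenter n c l s i - childCenter n c l sm i =
            (childCenter n c l s i - x i) + (x i - childCenter n c l sm i) := by ring
        rw [e2]; exact abs_add_le _ _
      rw [abs_sub_comm (childCenter n c l s i) (x i)] at h3
      rw [hd1] at h3
      linarith
    · intro hsm
      exact absurd (Finset.mem_univ sm) hsm
  have hS2sub : S2 ⊆ Cube n c l := by
    intro x hx
    exact hchild_sub sm (fun i => ((hcube x hx).1 i).le)
  have hS2meas : MeasurableSet S2 := measurableSet_cube _ _
  have hS2fin : μ S2 ≠ ⊤ := ((cube_isCompact z (by positivity)).measure_lt_top).ne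
  haveI : IsFiniteMeasure (μ.restrict S2) :=
    ⟨by rw [Measure.restrict_apply_univ]; exact lt_of_le_of_ne le_top hS2fin⟩
  have hS2low : (c₀ * A) ^ 2 * (μ S2).toReal ≤ ∫ x in S2, h x ^ 2 ∂μ := by
    have h1 : ∫ _x in S2, (c₀ * A) ^ 2 ∂μ ≤ ∫ x in S2, h x ^ 2 ∂μ := by
      refine integral_mono_ae (integrable_const _) (hintOn.mono_set hS2sub) ?_
      refine (ae_restrict_mem hS2meas).mono fun x hx => ?_
      obtain ⟨hx1, hx2⟩ := hS2h x hx
      calc (c₀ * A) ^ 2 ≤ |eval x (p sm)| ^ 2 :=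
            pow_le_pow_left₀ (by positivity) hx2 2
      _ = eval x (p sm) ^ 2 := sq_abs _
      _ = h x ^ 2 := by rw [hx1]
    rw [setIntegral_const, smul_eq_mul, mul_comm] at h1
    exact h1
  have hS2int : ∫ x in S2, h x ^ 2 ∂μ ≤ ∫ x, h x ^ 2 ∂μ :=
    setIntegral_le_integral hint (Filter.Eventually.of_forall fun x => sq_nonneg _)
  -- doubling chain
  have hdub' : IsDoubling μ Cd' := by
    intro c' l' hl'
    refine (hdub c' l' hl').trans (mul_le_mul_left ?_ _)
    exact ENNReal.ofReal_le_ofReal (le_max_left _ _)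
  have hQsub : Cube n c l ⊆ Cube n z ((2:ℝ) ^ (K + 3) * (ρ * (l / 2))) := by
    intro x hx i
    have h1 := hx i
    have h2 := hccdist sm i
    have h3 := hzcc i
    have h4 : |x i - z i| ≤ l := by
      have e : x i - z i = (x i - c i) + (childCenter n c l sm i - c i) * (-1) +
          (z i - childCenter n c l sm i) * (-1) := by ring
      calc |x i - z i| ≤ |x i - c i| + |childCenter n c l sm i - c i| +
            |z i - childCenter n c l sm i| := by
            rw [e]
            refine (abs_add_le _ _).trans (add_le_add ((abs_add_le _ _).trans
              (add_le_add le_rfl ?_)) ?_) <;> rw [abs_mul] <;> simp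
      _ ≤ l / 2 + l / 4 + l / 2 / 2 := by
            refine add_le_add (add_le_add h1 h2) ?_
            exact h3
      _ = l := by ring
    have h5 : (0:ℝ) < (2:ℝ) ^ (K + 1) := by positivity
    have h6 : (1:ℝ) ≤ (2:ℝ) ^ (K + 1) * ρ := by
      rw [← mul_inv_cancel₀ h5.ne']
      exact mul_le_mul_of_nonneg_left hρge h5.le
    have h7 : l ≤ (2:ℝ) ^ (K + 3) * (ρ * (l / 2)) / 2 := by
      have e : (2:ℝ) ^ (K + 3) = (2:ℝ) ^ (K + 1) * 4 := by
        rw [pow_succ, pow_succ]; ring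
      rw [e]
      nlinarith
    linarith
  have hμQ : (μ (Cube n c l)).toReal ≤ D * (μ S2).toReal := by
    have hchain : μ (Cube n c l) ≤ (ENNReal.ofReal Cd') ^ (K + 3) * μ S2 := by
      calc μ (Cube n c l) ≤ μ (Cube n z ((2:ℝ) ^ (K + 3) * (ρ * (l / 2)))) :=
            measure_mono hQsub
      _ ≤ (ENNReal.ofReal Cd') ^ (K + 3) * μ (Cube n z (ρ * (l / 2))) :=
            doubling_iter hdub' (K + 3) z (by positivity)
    have hfin : (ENNReal.ofReal Cd') ^ (K + 3) * μ S2 ≠ ⊤ :=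
      ENNReal.mul_ne_top (ENNReal.pow_ne_top ENNReal.ofReal_ne_top) hS2fin
    have := ENNReal.toReal_mono hfin hchain
    rwa [ENNReal.toReal_mul, ENNReal.toReal_pow, ENNReal.toReal_ofReal (le_max_right Cd 0)]
      at this
  have hsqrtQ : Real.sqrt (μ (Cube n c l)).toReal ≤
      Real.sqrt D * Real.sqrt (μ S2).toReal := by
    rw [← Real.sqrt_mul hD0]
    exact Real.sqrt_le_sqrt hμQ
  have hA2 : c₀ * A * Real.sqrt (μ S2).toReal ≤ Real.sqrt (∫ x, h x ^ 2 ∂μ) := by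
    have h1 : (c₀ * A) ^ 2 * (μ S2).toReal ≤ ∫ x, h x ^ 2 ∂μ := le_trans hS2low hS2int
    have h2 := Real.sqrt_le_sqrt h1
    rwa [Real.sqrt_mul (sq_nonneg _), Real.sqrt_sq (by positivity : (0:ℝ) ≤ c₀ * A)] at h2
  have hsqrtI : 0 ≤ Real.sqrt (∫ x, h x ^ 2 ∂μ) := Real.sqrt_nonneg _
  calc M * Real.sqrt (μ (Cube n c l)).toReal
      ≤ ((2:ℝ) ^ n * A) * Real.sqrt (μ (Cube n c l)).toReal :=
        mul_le_mul_of_nonneg_right hMle (Real.sqrt_nonneg _)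
    _ ≤ ((2:ℝ) ^ n * A) * (Real.sqrt D * Real.sqrt (μ S2).toReal) := by
        refine mul_le_mul_of_nonneg_left hsqrtQ ?_
        exact mul_nonneg (by positivity) hA0
    _ = ((2:ℝ) ^ n * Real.sqrt D / c₀) * (c₀ * A * Real.sqrt (μ S2).toReal) := by
        field_simp
    _ ≤ ((2:ℝ) ^ n * Real.sqrt D / c₀) * Real.sqrt (∫ x, h x ^ 2 ∂μ) := by
        refine mul_le_mul_of_nonneg_left hA2 ?_
        positivity
    _ ≤ ((2:ℝ) ^ n * Real.sqrt D / c₀ + 1) * Real.sqrt (∫ x, h x ^ 2 ∂μ) := by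
        nlinarith [hsqrtI]
end
end
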